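/- arXiv:1401.7091 — 4 statements merged into one kernel-verified Lean document; each statement's English description precedes it below -/
import Mathlib

section
/- Let n, k, m be positive integers with 1 ≤ k ≤ n−2 and 1 ≤ m ≤ n−k−1. Then q(K→(n,k,m)) = (3n−m−4+sqrt((n−3m)^2+8mk))/2. -/
open Matrix

namespace SignlessDigraph

variable {n : ℕ}

/-- Real adjacency matrix of a (multi)digraph on `Fin n`, given by arc multiplicities. -/
def adjMat (W : Fin n → Fin n → ℕ) : Matrix (Fin n) (Fin n) ℝ :=
  fun i j => (W i j : ℝ)

/-- Outdegree of a vertex. -/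
def outdeg (W : Fin n → Fin n → ℕ) (i : Fin n) : ℕ := ∑ j, W i j

/-- Indegree of a vertex. -/
def indeg (W : Fin n → Fin n → ℕ) (i : Fin n) : ℕ := ∑ j, W j i

/-- The signless Laplacian matrix `Q(D) = diag(outdegrees) + A(D)`. -/
noncomputable def Qmat (W : Fin n → Fin n → ℕ) : Matrix (Fin n) (Fin n) ℝ :=
  Matrix.diagonal (fun i => (outdeg W i : ℝ)) + adjMat W

/-- Spectral radius of a real matrix: the maximum modulus of its (complex) eigenvalues. -/
noncomputable def radius (M : Matrix (Fin n) (Fin n) ℝ) : ℝ :=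
  sSup {r : ℝ | ∃ μ ∈ spectrum ℂ (M.map ((↑) : ℝ → ℂ)), r = ‖μ‖}

/-- The signless Laplacian spectral radius `q(D)`. -/
noncomputable def q (W : Fin n → Fin n → ℕ) : ℝ := radius (Qmat W)

/-- The (adjacency) spectral radius `ρ(D)`. -/
noncomputable def rho (W : Fin n → Fin n → ℕ) : ℝ := radius (adjMat W)

/-- A digraph is simple: no loops and no multiple arcs. -/
def Simple (W : Fin n → Fin n → ℕ) : Prop :=
  (∀ i, W i i = 0) ∧ ∀ i j, W i j ≤ 1

/-- Strong connectivity: every vertex is reachable from every vertex by a directed path. -/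
def StronglyConnected (W : Fin n → Fin n → ℕ) : Prop :=
  ∀ i j : Fin n, Relation.ReflTransGen (fun a b => W a b ≠ 0) i j

/-- Isomorphism of digraphs on `Fin n`. -/
def Iso (W W' : Fin n → Fin n → ℕ) : Prop :=
  ∃ e : Fin n ≃ Fin n, ∀ i j, W (e i) (e j) = W' i j

/-- The clique number: maximum size of a set of vertices with all arcs in both directions. -/
noncomputable def cliqueNum (W : Fin n → Fin n → ℕ) : ℕ :=
  sSup {d : ℕ | ∃ s : Finset (Fin n), s.card = d ∧ ∀ i ∈ s, ∀ j ∈ s, i ≠ j → W i j ≠ 0}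

/-- `W` has a directed cycle of length `c`. -/
def HasCycleLen (W : Fin n → Fin n → ℕ) (c : ℕ) : Prop :=
  ∃ (hc : 2 ≤ c) (p : Fin c → Fin n), Function.Injective p ∧
    ∀ i : Fin c, W (p i) (p ⟨((i : ℕ) + 1) % c, Nat.mod_lt _ (by omega)⟩) ≠ 0

/-- The girth: length of a shortest directed cycle. -/
noncomputable def girth (W : Fin n → Fin n → ℕ) : ℕ := sInf {c | HasCycleLen W c}

/-- The complete digraph `K_n^↔`. -/
def Kcomp (n : ℕ) : Fin n → Fin n → ℕ := fun i j => if i = j then 0 else 1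

/-- The directed cycle `C_n^→`, with arcs `i → i+1 (mod n)`. -/
def cyc (n : ℕ) : Fin n → Fin n → ℕ := fun i j => if (j : ℕ) = ((i : ℕ) + 1) % n then 1 else 0

/-- The digraph `B_{n,d}` (for `2 ≤ d ≤ n-1`): a complete digraph on the vertices
`0, …, d-1` together with a directed path `0 → d → d+1 → ⋯ → n-1 → 1`
(the path `u_1 u_2 ⋯ u_{n-d+2}` with `u_1 = 0`, `u_{n-d+2} = 1`,
and internal vertices `d, …, n-1`). -/
def B (n d : ℕ) : Fin n → Fin n → ℕ := fun i j =>
  if i ≠ j ∧ (i : ℕ) < d ∧ (j : ℕ) < d then 1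
  else if (i : ℕ) = 0 ∧ (j : ℕ) = d then 1
  else if d ≤ (i : ℕ) ∧ (j : ℕ) = (i : ℕ) + 1 then 1
  else if (i : ℕ) = n - 1 ∧ (j : ℕ) = 1 then 1
  else 0

/-- `B'_{n,d} = B_{n,d} − (u_{n-d+1}, u_{n-d+2}) + (u_{n-d+1}, u_1)`, i.e. the arc
`n-1 → 1` is replaced by the arc `n-1 → 0`. -/
def B' (n d : ℕ) : Fin n → Fin n → ℕ := fun i j =>
  if (i : ℕ) = n - 1 ∧ (j : ℕ) = 1 then 0
  else if (i : ℕ) = n - 1 ∧ (j : ℕ) = 0 then 1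
  else B n d i j

/-- The digraph `C_{n,g}` (for `2 ≤ g ≤ n-1`): vertices `u_1, …, u_n` are `0, …, n-1`,
with arcs `i → i+1` for `0 ≤ i ≤ n-2` together with the arcs `g-1 → 0` and `n-1 → 0`. -/
def Cng (n g : ℕ) : Fin n → Fin n → ℕ := fun i j =>
  if (j : ℕ) = (i : ℕ) + 1 then 1
  else if ((i : ℕ) = g - 1 ∨ (i : ℕ) = n - 1) ∧ (j : ℕ) = 0 then 1
  else 0

/-- `C'_{n,g} = C_{n,g} − (u_n, u_1) + (u_n, u_g)`, i.e. the arc `n-1 → 0` is replaced by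
the arc `n-1 → g-1`. -/
def Cng' (n g : ℕ) : Fin n → Fin n → ℕ := fun i j =>
  if (i : ℕ) = n - 1 ∧ (j : ℕ) = 0 then 0
  else if (i : ℕ) = n - 1 ∧ (j : ℕ) = g - 1 then 1
  else Cng n g i j

/-- The θ-digraph `θ(a,b,c)` realized on `Fin n` (intended for `n = a + b + c + 2`):
vertex `0` is the common initial vertex of the paths `P_{a+2}`, `P_{b+2}` and terminal
vertex of `P_{c+2}`; vertex `1` is the common terminal vertex of `P_{a+2}`, `P_{b+2}`
and initial vertex of `P_{c+2}`; the internal vertices of the three paths are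
`2, …, a+1`, `a+2, …, a+b+1` and `a+b+2, …, a+b+c+1` respectively. -/
def theta (n a b c : ℕ) : Fin n → Fin n → ℕ := fun i j =>
  if ((a = 0 ∧ (i : ℕ) = 0 ∧ (j : ℕ) = 1) ∨
      (a ≠ 0 ∧ (((i : ℕ) = 0 ∧ (j : ℕ) = 2) ∨
        (2 ≤ (i : ℕ) ∧ (i : ℕ) ≤ a ∧ (j : ℕ) = (i : ℕ) + 1) ∨
        ((i : ℕ) = a + 1 ∧ (j : ℕ) = 1))) ∨
      (b = 0 ∧ (i : ℕ) = 0 ∧ (j : ℕ) = 1) ∨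
      (b ≠ 0 ∧ (((i : ℕ) = 0 ∧ (j : ℕ) = a + 2) ∨
        (a + 2 ≤ (i : ℕ) ∧ (i : ℕ) ≤ a + b ∧ (j : ℕ) = (i : ℕ) + 1) ∨
        ((i : ℕ) = a + b + 1 ∧ (j : ℕ) = 1))) ∨
      (c = 0 ∧ (i : ℕ) = 1 ∧ (j : ℕ) = 0) ∨
      (c ≠ 0 ∧ (((i : ℕ) = 1 ∧ (j : ℕ) = a + b + 2) ∨
        (a + b + 2 ≤ (i : ℕ) ∧ (i : ℕ) ≤ a + b + c ∧ (j : ℕ) = (i : ℕ) + 1) ∨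
        ((i : ℕ) = a + b + c + 1 ∧ (j : ℕ) = 0))))
  then 1 else 0

/-- The digraph `K→(n,k,m)`: the vertex set is partitioned into
`V₁ = {0,…,m-1}`, `S = {m,…,m+k-1}`, `V₂ = {m+k,…,n-1}`; it is the complete digraph
with all arcs from `V₂` to `V₁` removed. -/
def Kdir (n k m : ℕ) : Fin n → Fin n → ℕ := fun i j =>
  if i = j then 0
  else if m + k ≤ (i : ℕ) ∧ (j : ℕ) < m then 0
  else 1

/-- The digraph `D_{uv}` obtained from `D` by deleting the arc `(u,v)`, identifying `u`
with `v` (the merged vertex is `v`; the vertex `u` becomes isolated) and deleting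
multiple arcs (and loops). -/
def contract (W : Fin n → Fin n → ℕ) (u v : Fin n) : Fin n → Fin n → ℕ :=
  fun i j =>
    if i = u ∨ j = u ∨ i = j then 0
    else if i = v then min 1 (W v j + W u j)
    else if j = v then min 1 (W i v + W i u)
    else min 1 (W i j)

/-- The digraph `D^w` obtained from `D` by subdividing the arc `(u,v)` with a new
vertex `w` (realized as the last vertex of `Fin (n+1)`). -/
def subdivide (W : Fin n → Fin n → ℕ) (u v : Fin n) : Fin (n + 1) → Fin (n + 1) → ℕ :=
  fun i j =>
    if hi : (i : ℕ) < n then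
      if hj : (j : ℕ) < n then
        if (⟨(i : ℕ), hi⟩ : Fin n) = u ∧ (⟨(j : ℕ), hj⟩ : Fin n) = v then 0
        else W ⟨(i : ℕ), hi⟩ ⟨(j : ℕ), hj⟩
      else if (⟨(i : ℕ), hi⟩ : Fin n) = u then 1 else 0
    else
      if hj : (j : ℕ) < n then (if (⟨(j : ℕ), hj⟩ : Fin n) = v then 1 else 0)
      else 0



section Aux

/-- Eigenvalue criterion for matrix spectrum over ℂ. -/
lemma mem_spectrum_iff_mulVec {n : ℕ} (M : Matrix (Fin n) (Fin n) ℂ) (μ : ℂ) :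
    μ ∈ spectrum ℂ M ↔ ∃ v : Fin n → ℂ, v ≠ 0 ∧ M.mulVec v = μ • v := by
  rw [spectrum.mem_iff, Matrix.isUnit_iff_isUnit_det, isUnit_iff_ne_zero, not_ne_iff,
    ← Matrix.exists_mulVec_eq_zero_iff]
  constructor
  · rintro ⟨v, hv, hv0⟩
    refine ⟨v, hv, ?_⟩
    have := hv0
    rw [Matrix.sub_mulVec, Algebra.algebraMap_eq_smul_one, Matrix.smul_mulVec,
      Matrix.one_mulVec, sub_eq_zero] at this
    exact this.symm
  · rintro ⟨v, hv, hv0⟩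
    refine ⟨v, hv, ?_⟩
    rw [Matrix.sub_mulVec, Algebra.algebraMap_eq_smul_one, Matrix.smul_mulVec,
      Matrix.one_mulVec, sub_eq_zero, hv0]

/-- If a nonnegative matrix has a positive eigenvector with nonnegative eigenvalue `lam`,
then its spectral radius equals `lam`. -/
lemma radius_eq_of_pos_eigenvector {n : ℕ} (hn : 0 < n)
    (M : Matrix (Fin n) (Fin n) ℝ) (hM : ∀ i j, 0 ≤ M i j)
    (u : Fin n → ℝ) (hu : ∀ i, 0 < u i) (lam : ℝ) (hlam : 0 ≤ lam)
    (heig : ∀ i, ∑ j, M i j * u j = lam * u i) :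
    sSup {r : ℝ | ∃ μ ∈ spectrum ℂ (M.map ((↑) : ℝ → ℂ)), r = ‖μ‖} = lam := by
  set Mc := M.map ((↑) : ℝ → ℂ) with hMc
  have hbound : ∀ μ ∈ spectrum ℂ Mc, ‖μ‖ ≤ lam := by
    intro μ hμ
    obtain ⟨v, hv0, hvv⟩ := (mem_spectrum_iff_mulVec Mc μ).1 hμ
    obtain ⟨i₀, -, hmax⟩ := Finset.exists_max_image Finset.univ
      (fun i => ‖v i‖ / u i) ⟨⟨0, hn⟩, Finset.mem_univ _⟩
    set c := ‖v i₀‖ / u i₀ with hc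
    have hub : ∀ j, ‖v j‖ ≤ c * u j := by
      intro j
      exact (div_le_iff₀ (hu j)).1 (hmax j (Finset.mem_univ j))
    have hcpos : 0 < c := by
      obtain ⟨j, hj⟩ := Function.ne_iff.1 hv0
      have h1 : 0 < ‖v j‖ / u j :=
        div_pos (norm_pos_iff.2 hj) (hu j)
      exact lt_of_lt_of_le h1 (hmax j (Finset.mem_univ j))
    have hvi : ‖v i₀‖ = c * u i₀ := by
      rw [hc, div_mul_cancel₀ _ (hu i₀).ne']
    have hvipos : 0 < ‖v i₀‖ := hvi ▸ mul_pos hcpos (hu i₀)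
    have hrow : (Mc.mulVec v) i₀ = μ * v i₀ := by
      rw [hvv]; simp
    have hkey : ‖μ‖ * ‖v i₀‖ ≤ lam * ‖v i₀‖ := by
      calc ‖μ‖ * ‖v i₀‖ = ‖(Mc.mulVec v) i₀‖ := by
            rw [hrow, norm_mul]
        _ ≤ ∑ j, ‖Mc i₀ j * v j‖ := by
            show ‖∑ j, Mc i₀ j * v j‖ ≤ _
            exact norm_sum_le _ _
        _ ≤ ∑ j, M i₀ j * (c * u j) := by
            apply Finset.sum_le_sum
            intro j _
            rw [norm_mul, hMc, Matrix.map_apply, Complex.norm_real, Real.norm_eq_abs,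
              abs_of_nonneg (hM i₀ j)]
            exact mul_le_mul_of_nonneg_left (hub j) (hM i₀ j)
        _ = c * ∑ j, M i₀ j * u j := by
            rw [Finset.mul_sum]; apply Finset.sum_congr rfl; intro j _; ring
        _ = lam * ‖v i₀‖ := by rw [heig i₀, hvi]; ring
    exact le_of_mul_le_mul_right hkey hvipos
  have hmem : (lam : ℂ) ∈ spectrum ℂ Mc := by
    apply (mem_spectrum_iff_mulVec Mc _).2
    refine ⟨fun j => (u j : ℂ), ?_, ?_⟩
    · intro h
      have := congrFun h ⟨0, hn⟩
      simp only [Pi.zero_apply, Complex.ofReal_eq_zero] at this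
      exact (hu _).ne' this
    · funext i
      show ∑ j, Mc i j * (u j : ℂ) = _
      have h1 : ∑ j, Mc i j * (u j : ℂ) = ((∑ j, M i j * u j : ℝ) : ℂ) := by
        push_cast [hMc, Matrix.map_apply]; rfl
      rw [h1, heig i]
      push_cast
      simp [smul_eq_mul]
  have hSmem : lam ∈ {r : ℝ | ∃ μ ∈ spectrum ℂ Mc, r = ‖μ‖} :=
    ⟨(lam : ℂ), hmem, by rw [Complex.norm_real, Real.norm_eq_abs, abs_of_nonneg hlam]⟩
  have hSub : ∀ r ∈ {r : ℝ | ∃ μ ∈ spectrum ℂ Mc, r = ‖μ‖}, r ≤ lam := by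
    rintro r ⟨μ, hμ, rfl⟩; exact hbound μ hμ
  exact le_antisymm (csSup_le ⟨lam, hSmem⟩ hSub) (le_csSup ⟨lam, hSub⟩ hSmem)

lemma sum_if_lt (n c : ℕ) (hc : c ≤ n) (x y : ℝ) :
    ∑ j : Fin n, (if (j : ℕ) < c then x else y) = c * x + ((n : ℝ) - c) * y := by
  have h1 : ∑ j : Fin n, (if (j : ℕ) < c then x else y)
      = ∑ j ∈ Finset.range n, (if j < c then x else y) :=
    Fin.sum_univ_eq_sum_range (fun j => if j < c then x else y) n
  rw [h1, Finset.range_eq_Ico, ← Finset.sum_Ico_consecutive _ (Nat.zero_le c) hc]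
  have h2 : ∑ j ∈ Finset.Ico 0 c, (if j < c then x else y) = c * x := by
    rw [Finset.sum_congr rfl (fun j hj => if_pos (Finset.mem_Ico.1 hj).2),
      Finset.sum_const, Nat.card_Ico, Nat.sub_zero, nsmul_eq_mul]
  have h3 : ∑ j ∈ Finset.Ico c n, (if j < c then x else y) = ((n : ℝ) - c) * y := by
    rw [Finset.sum_congr rfl (fun j hj => if_neg (not_lt.2 (Finset.mem_Ico.1 hj).1)),
      Finset.sum_const, Nat.card_Ico, nsmul_eq_mul, Nat.cast_sub hc]
  rw [h2, h3]

end Aux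

/-- For `1 ≤ k ≤ n-2` and `1 ≤ m ≤ n-k-1`,
`q(K→(n,k,m)) = (3n-m-4+√((n-3m)²+8mk))/2`. -/
theorem q_Kdir {n k m : ℕ} (hk : 1 ≤ k) (hkn : k ≤ n - 2) (hm : 1 ≤ m)
    (hmn : m ≤ n - k - 1) :
    q (Kdir n k m) =
      (3 * (n : ℝ) - (m : ℝ) - 4 +
          Real.sqrt (((n : ℝ) - 3 * (m : ℝ)) ^ 2 + 8 * (m : ℝ) * (k : ℝ))) / 2 := by
  have hn : m + k + 1 ≤ n := by omega
  have hn0 : 0 < n := by omega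
  have hkR : (1:ℝ) ≤ (k:ℝ) := by exact_mod_cast hk
  have hmR : (1:ℝ) ≤ (m:ℝ) := by exact_mod_cast hm
  have hnR : (m:ℝ) + k + 1 ≤ (n:ℝ) := by exact_mod_cast hn
  have htR : (0:ℝ) < (n:ℝ) - m - k := by linarith
  have htne : (n:ℝ) - m - k ≠ 0 := ne_of_gt htR
  have hDnn : (0:ℝ) ≤ ((n : ℝ) - 3 * (m : ℝ)) ^ 2 + 8 * (m : ℝ) * (k : ℝ) := by positivity
  set s : ℝ := Real.sqrt (((n : ℝ) - 3 * (m : ℝ)) ^ 2 + 8 * (m : ℝ) * (k : ℝ)) with hs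
  have hsq : s ^ 2 = ((n : ℝ) - 3 * (m : ℝ)) ^ 2 + 8 * (m : ℝ) * (k : ℝ) := by
    rw [hs]; exact Real.sq_sqrt hDnn
  have hsnn : 0 ≤ s := by rw [hs]; exact Real.sqrt_nonneg _
  have hsgt : |(n:ℝ) - 3*m - 2*k| < s := by
    have h1 : ((n:ℝ)-3*m-2*k)^2 < ((n:ℝ)-3*m)^2 + 8*m*k := by
      nlinarith [mul_pos (show (0:ℝ) < k by linarith) htR]
    calc |(n:ℝ)-3*m-2*k| = Real.sqrt (((n:ℝ)-3*m-2*k)^2) := (Real.sqrt_sq_eq_abs _).symm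
      _ < s := by rw [hs]; exact Real.sqrt_lt_sqrt (sq_nonneg _) h1
  set L : ℝ := (3 * (n : ℝ) - (m : ℝ) - 4 + s) / 2 with hL
  have hLnn : 0 ≤ L := by linarith
  have hlas : (n:ℝ) + m + k - 2 < L := by
    have h1 : -((n:ℝ) - 3*m - 2*k) ≤ |(n:ℝ) - 3*m - 2*k| := neg_le_abs _
    linarith
  have hchar : (L - ((n:ℝ)+m+k-2)) * (L - (2*(n:ℝ)-2*m-k-2)) = ((n:ℝ)-m-k)*k := by
    rw [hL]
    linear_combination ((1:ℝ)/4) * hsq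
  set z : ℝ := (L - ((n:ℝ)+m+k-2)) / ((n:ℝ)-m-k) with hz
  have hzpos : 0 < z := div_pos (by linarith) htR
  have htz : ((n:ℝ)-m-k) * z = L - ((n:ℝ)+m+k-2) := by
    rw [hz, mul_comm, div_mul_cancel₀ _ htne]
  have E1 : (n:ℝ)+m+k-2 + ((n:ℝ)-m-k)*z = L := by rw [htz]; ring
  have E2 : (k:ℝ) + (2*(n:ℝ)-2*m-k-2)*z = L * z := by
    have h3 : ((n:ℝ)-m-k) * ((k:ℝ) + (2*(n:ℝ)-2*m-k-2)*z) = ((n:ℝ)-m-k) * (L * z) := by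
      linear_combination ((2*(n:ℝ)-2*m-k-2) - L) * htz - hchar
    exact mul_left_cancel₀ htne h3
  set u : Fin n → ℝ := fun i => if (i:ℕ) < m + k then 1 else z with hu
  have hupos : ∀ i, 0 < u i := by
    intro i; simp only [hu]
    split
    · exact one_pos
    · exact hzpos
  have hQnn : ∀ i j, 0 ≤ Qmat (Kdir n k m) i j := by
    intro i j
    simp only [Qmat, Matrix.add_apply, Matrix.diagonal_apply, adjMat]
    apply add_nonneg
    · split <;> positivity
    · positivity
  have hsum_u : ∑ j : Fin n, u j = (m:ℝ) + k + ((n:ℝ)-m-k) * z := by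
    simp only [hu]
    rw [sum_if_lt n (m+k) (by omega) 1 z]
    push_cast; ring
  have hsum_m : ∑ j : Fin n, (if (j:ℕ) < m then u j else 0) = (m:ℝ) := by
    have h4 : ∀ j : Fin n, (if (j:ℕ) < m then u j else 0) = (if (j:ℕ) < m then (1:ℝ) else 0) := by
      intro j
      by_cases hj : (j:ℕ) < m
      · rw [if_pos hj, if_pos hj]; simp only [hu]; rw [if_pos (by omega)]
      · rw [if_neg hj, if_neg hj]
    rw [Finset.sum_congr rfl fun j _ => h4 j, sum_if_lt n m (by omega) 1 0]; ring
  have hrowsum' : ∀ (w : Fin n → ℝ) (i : Fin n), ¬ (m + k ≤ (i:ℕ)) →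
      ∑ j, ((Kdir n k m i j : ℕ):ℝ) * w j = (∑ j, w j) - w i := by
    intro w i hi
    have hKi : ∀ j, ((Kdir n k m i j : ℕ):ℝ) * w j = w j - (if i = j then w j else 0) := by
      intro j
      by_cases hij : i = j
      · subst hij; simp [Kdir]
      · simp [Kdir, hij, hi]
    rw [Finset.sum_congr rfl fun j _ => hKi j, Finset.sum_sub_distrib,
      Finset.sum_ite_eq Finset.univ i w, if_pos (Finset.mem_univ i)]
  have hrowsum : ∀ (w : Fin n → ℝ) (i : Fin n), m + k ≤ (i:ℕ) →
      ∑ j, ((Kdir n k m i j : ℕ):ℝ) * w j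
        = (∑ j, w j) - (∑ j : Fin n, if (j:ℕ) < m then w j else 0) - w i := by
    intro w i hi
    have hKi : ∀ j, ((Kdir n k m i j : ℕ):ℝ) * w j
        = (w j - (if (j:ℕ) < m then w j else 0)) - (if i = j then w j else 0) := by
      intro j
      by_cases hij : i = j
      · subst hij
        have him : ¬ ((i:ℕ) < m) := by omega
        simp [Kdir, him]
      · by_cases hjm : (j:ℕ) < m
        · simp [Kdir, hij, hi, hjm]
        · simp [Kdir, hij, hjm]
    rw [Finset.sum_congr rfl fun j _ => hKi j, Finset.sum_sub_distrib, Finset.sum_sub_distrib,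
      Finset.sum_ite_eq Finset.univ i w, if_pos (Finset.mem_univ i)]
  have houtdeg : ∀ i : Fin n, ((outdeg (Kdir n k m) i : ℕ) : ℝ)
      = if m + k ≤ (i:ℕ) then (n:ℝ) - m - 1 else (n:ℝ) - 1 := by
    intro i
    rw [outdeg, Nat.cast_sum]
    by_cases hi : m + k ≤ (i:ℕ)
    · rw [if_pos hi]
      have h5 := hrowsum (fun _ => 1) i hi
      simp only [mul_one] at h5
      rw [h5, Finset.sum_const, Finset.card_univ, Fintype.card_fin, nsmul_eq_mul,
        sum_if_lt n m (by omega) 1 0]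
      ring
    · rw [if_neg hi]
      have h5 := hrowsum' (fun _ => 1) i hi
      simp only [mul_one] at h5
      rw [h5, Finset.sum_const, Finset.card_univ, Fintype.card_fin, nsmul_eq_mul]
      ring
  have heig : ∀ i : Fin n, ∑ j, Qmat (Kdir n k m) i j * u j = L * u i := by
    intro i
    have hsplit : ∑ j, Qmat (Kdir n k m) i j * u j
        = ((outdeg (Kdir n k m) i : ℕ):ℝ) * u i + ∑ j, ((Kdir n k m i j : ℕ):ℝ) * u j := by
      have h6 : ∀ j, Qmat (Kdir n k m) i j * u j
          = (if i = j then ((outdeg (Kdir n k m) i : ℕ):ℝ) * u j else 0)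
            + ((Kdir n k m i j : ℕ):ℝ) * u j := by
        intro j
        simp only [Qmat, Matrix.add_apply, Matrix.diagonal_apply, adjMat]
        split <;> ring
      rw [Finset.sum_congr rfl fun j _ => h6 j, Finset.sum_add_distrib,
        Finset.sum_ite_eq Finset.univ i (fun j => ((outdeg (Kdir n k m) i : ℕ):ℝ) * u j),
        if_pos (Finset.mem_univ i)]
    rw [hsplit, houtdeg i]
    by_cases hi : m + k ≤ (i:ℕ)
    · rw [if_pos hi, hrowsum u i hi, hsum_u, hsum_m]
      have hui : u i = z := by simp only [hu]; rw [if_neg (by omega)]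
      rw [hui]
      linear_combination E2
    · rw [if_neg hi, hrowsum' u i hi, hsum_u]
      have hui : u i = 1 := by simp only [hu]; rw [if_pos (by omega)]
      rw [hui]
      linear_combination E1
  have hfin := radius_eq_of_pos_eigenvector hn0 (Qmat (Kdir n k m)) hQnn u hupos L hLnn heig
  show radius (Qmat (Kdir n k m)) = L
  exact hfin


end SignlessDigraph
end

section
/- Let D be a simple strongly connected digraph on n vertices that is not isomorphic to the complete digraph K_n^↔ and not isomorphic to K→(n,n−2,1). Then q(D) < (3n−5+sqrt(n^2+2n−7))/2. Consequently, K→(n,n−2,1) is the unique digraph achieving the second maximum signless Laplacian spectral radius (3n−5+sqrt(n^2+2n−7))/2 among all strongly connected digraphs on n vertices. -/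
open Matrix

namespace SignlessDigraph

variable {n : ℕ}

/-! ### Auxiliary lemmas for the proof -/

open Finset in
lemma sum_one_special (a : Fin n) (g : Fin n → ℝ) (x t : ℝ) (ha : g a = x)
    (hg : ∀ i, i ≠ a → g i = t) : ∑ i, g i = x + ((n:ℝ) - 1) * t := by
  have h : ∀ i ∈ Finset.univ, g i = t + (if i = a then x - t else 0) := by
    intro i _
    by_cases h : i = a
    · subst h; rw [ha]; simp
    · rw [hg i h]; simp [h]
  rw [Finset.sum_congr rfl h, Finset.sum_add_distrib, Finset.sum_const,
    Finset.sum_ite_eq' Finset.univ a (fun _ => x - t)]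
  simp [Finset.card_univ]
  ring

open Finset in
lemma sum_two_special (a b : Fin n) (hab : a ≠ b) (g : Fin n → ℝ) (x y t : ℝ)
    (ha : g a = x) (hb : g b = y)
    (hg : ∀ i, i ≠ a → i ≠ b → g i = t) : ∑ i, g i = x + y + ((n:ℝ) - 2) * t := by
  have h : ∀ i ∈ Finset.univ, g i
      = t + ((if i = a then x - t else 0) + (if i = b then y - t else 0)) := by
    intro i _
    by_cases h1 : i = a
    · subst h1; rw [ha]; simp [hab]
    · by_cases h2 : i = b
      · subst h2; rw [hb]; simp [h1]
      · rw [hg i h1 h2]; simp [h1, h2]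
  rw [Finset.sum_congr rfl h, Finset.sum_add_distrib, Finset.sum_const,
    Finset.sum_add_distrib, Finset.sum_ite_eq' Finset.univ a (fun _ => x - t),
    Finset.sum_ite_eq' Finset.univ b (fun _ => y - t)]
  simp [Finset.card_univ]
  ring

open Finset in
lemma sum_three_special (a b c : Fin n) (hab : a ≠ b) (hac : a ≠ c) (hbc : b ≠ c)
    (g : Fin n → ℝ) (x y z t : ℝ)
    (ha : g a = x) (hb : g b = y) (hc : g c = z)
    (hg : ∀ i, i ≠ a → i ≠ b → i ≠ c → g i = t) :
    ∑ i, g i = x + y + z + ((n:ℝ) - 3) * t := by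
  have h : ∀ i ∈ Finset.univ, g i
      = t + ((if i = a then x - t else 0) + (if i = b then y - t else 0)
        + (if i = c then z - t else 0)) := by
    intro i _
    by_cases h1 : i = a
    · subst h1; rw [ha]; simp [hab, hac]
    · by_cases h2 : i = b
      · subst h2; rw [hb]; simp [h1, hbc]
      · by_cases h3 : i = c
        · subst h3; rw [hc]; simp [h1, h2]
        · rw [hg i h1 h2 h3]; simp [h1, h2, h3]
  rw [Finset.sum_congr rfl h, Finset.sum_add_distrib, Finset.sum_const,
    Finset.sum_add_distrib, Finset.sum_add_distrib,
    Finset.sum_ite_eq' Finset.univ a (fun _ => x - t),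
    Finset.sum_ite_eq' Finset.univ b (fun _ => y - t),
    Finset.sum_ite_eq' Finset.univ c (fun _ => z - t)]
  simp [Finset.card_univ]
  ring

lemma exists_eigvec (A : Matrix (Fin n) (Fin n) ℝ) {μ : ℂ}
    (hμ : μ ∈ spectrum ℂ (A.map ((↑) : ℝ → ℂ))) :
    ∃ z : Fin n → ℂ, z ≠ 0 ∧ (A.map ((↑) : ℝ → ℂ)).mulVec z = μ • z := by
  rw [spectrum.mem_iff, Algebra.algebraMap_eq_smul_one] at hμ
  have hdet : (μ • (1:Matrix (Fin n) (Fin n) ℂ) - A.map ((↑) : ℝ → ℂ)).det = 0 := by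
    by_contra h
    exact hμ ((Matrix.isUnit_iff_isUnit_det _).mpr (isUnit_iff_ne_zero.mpr h))
  obtain ⟨z, hz0, hz⟩ := (Matrix.exists_mulVec_eq_zero_iff).mpr hdet
  refine ⟨z, hz0, ?_⟩
  rw [Matrix.sub_mulVec, Matrix.smul_mulVec, Matrix.one_mulVec, sub_eq_zero] at hz
  exact hz.symm

lemma mem_spectrum_of_eigvec (A : Matrix (Fin n) (Fin n) ℝ) (r : ℝ) (x : Fin n → ℝ)
    (hx : x ≠ 0) (hAx : A.mulVec x = r • x) :
    (r : ℂ) ∈ spectrum ℂ (A.map ((↑) : ℝ → ℂ)) := by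
  rw [spectrum.mem_iff, Algebra.algebraMap_eq_smul_one]
  intro hunit
  have hdet := (Matrix.isUnit_iff_isUnit_det _).mp hunit
  rw [isUnit_iff_ne_zero] at hdet
  apply hdet
  rw [← Matrix.exists_mulVec_eq_zero_iff]
  refine ⟨fun i => (x i : ℂ), ?_, ?_⟩
  · obtain ⟨i, hi⟩ := Function.ne_iff.mp hx
    exact Function.ne_iff.mpr ⟨i, by simpa using hi⟩
  · funext i
    have h1 : (A.map ((↑) : ℝ → ℂ)).mulVec (fun i => (x i : ℂ)) i = ((A.mulVec x i : ℝ) : ℂ) := by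
      simp [Matrix.mulVec, dotProduct, Matrix.map_apply]
    rw [Matrix.sub_mulVec, Matrix.smul_mulVec, Matrix.one_mulVec]
    simp only [Pi.sub_apply, Pi.smul_apply, smul_eq_mul, h1, hAx]
    simp

lemma exchange (y v : Fin n → ℝ) (A : Matrix (Fin n) (Fin n) ℝ) :
    ∑ i, y i * ∑ j, A i j * v j = ∑ j, (∑ i, y i * A i j) * v j := by
  simp only [Finset.mul_sum, Finset.sum_mul]
  rw [Finset.sum_comm]
  exact Finset.sum_congr rfl fun j _ => Finset.sum_congr rfl fun i _ => by ring

lemma eig_abs_le (A B : Matrix (Fin n) (Fin n) ℝ) (y : Fin n → ℝ) (q : ℝ)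
    (hA0 : ∀ i j, 0 ≤ A i j) (hAB : ∀ i j, A i j ≤ B i j)
    (hy : ∀ i, 0 < y i) (hcol : ∀ j, ∑ i, y i * B i j ≤ q * y j)
    {μ : ℂ} (hμ : μ ∈ spectrum ℂ (A.map ((↑) : ℝ → ℂ))) : ‖μ‖ ≤ q := by
  obtain ⟨z, hz0, hz⟩ := exists_eigvec A hμ
  set v : Fin n → ℝ := fun i => ‖z i‖ with hv
  have hv0 : ∀ i, 0 ≤ v i := fun i => norm_nonneg _
  have key : ∀ i, ‖μ‖ * v i ≤ ∑ j, A i j * v j := by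
    intro i
    have h1 : (∑ j, ((A i j : ℝ) : ℂ) * z j) = μ * z i := by
      have := congrFun hz i
      simpa [Matrix.mulVec, dotProduct, Matrix.map_apply] using this
    calc ‖μ‖ * v i = ‖μ * z i‖ := by rw [norm_mul]
      _ = ‖∑ j, ((A i j : ℝ) : ℂ) * z j‖ := by rw [h1]
      _ ≤ ∑ j, ‖((A i j : ℝ) : ℂ) * z j‖ := norm_sum_le _ _
      _ = ∑ j, A i j * v j := Finset.sum_congr rfl fun j _ => by
          rw [norm_mul, Complex.norm_real, Real.norm_eq_abs, abs_of_nonneg (hA0 i j)]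
  have hpos : 0 < ∑ i, y i * v i := by
    obtain ⟨i0, hi0⟩ := Function.ne_iff.mp hz0
    exact Finset.sum_pos' (fun i _ => mul_nonneg (hy i).le (hv0 i))
      ⟨i0, Finset.mem_univ _, mul_pos (hy i0) (norm_pos_iff.mpr hi0)⟩
  have main : ‖μ‖ * ∑ i, y i * v i ≤ q * ∑ i, y i * v i := by
    calc ‖μ‖ * ∑ i, y i * v i = ∑ i, y i * (‖μ‖ * v i) := by
          rw [Finset.mul_sum]; exact Finset.sum_congr rfl fun i _ => by ring
      _ ≤ ∑ i, y i * ∑ j, A i j * v j :=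
          Finset.sum_le_sum fun i _ => mul_le_mul_of_nonneg_left (key i) (hy i).le
      _ = ∑ j, (∑ i, y i * A i j) * v j := exchange y v A
      _ ≤ ∑ j, (∑ i, y i * B i j) * v j :=
          Finset.sum_le_sum fun j _ => mul_le_mul_of_nonneg_right
            (Finset.sum_le_sum fun i _ => mul_le_mul_of_nonneg_left (hAB i j) (hy i).le) (hv0 j)
      _ ≤ ∑ j, (q * y j) * v j :=
          Finset.sum_le_sum fun j _ => mul_le_mul_of_nonneg_right (hcol j) (hv0 j)
      _ = q * ∑ j, y j * v j := by
          rw [Finset.mul_sum]; exact Finset.sum_congr rfl fun j _ => by ring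
  exact le_of_mul_le_mul_right main hpos

lemma eig_abs_lt (A B : Matrix (Fin n) (Fin n) ℝ) (y : Fin n → ℝ) (q : ℝ)
    (hA0 : ∀ i j, 0 ≤ A i j) (hAB : ∀ i j, A i j ≤ B i j)
    (hy : ∀ i, 0 < y i) (hcol : ∀ j, ∑ i, y i * B i j = q * y j)
    (hq : 0 < q) (u v u2 v2 j1 : Fin n)
    (hBpat : ∀ i j, ¬(i = u ∧ j = v) → 0 < B i j)
    (hj1u : j1 ≠ u) (hj1v : j1 ≠ v)
    (hstr : A u2 v2 < B u2 v2)
    {μ : ℂ} (hμ : μ ∈ spectrum ℂ (A.map ((↑) : ℝ → ℂ))) : ‖μ‖ < q := by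
  have hle : ‖μ‖ ≤ q :=
    eig_abs_le A B y q hA0 hAB hy (fun j => (hcol j).le) hμ
  rcases lt_or_eq_of_le hle with h | heq
  · exact h
  exfalso
  obtain ⟨z, hz0, hz⟩ := exists_eigvec A hμ
  set v' : Fin n → ℝ := fun i => ‖z i‖ with hv
  have hv0 : ∀ i, 0 ≤ v' i := fun i => norm_nonneg _
  have hB0 : ∀ i j, 0 ≤ B i j := fun i j => (hA0 i j).trans (hAB i j)
  have key : ∀ i, q * v' i ≤ ∑ j, A i j * v' j := by
    intro i
    rw [← heq]
    have h1 : (∑ j, ((A i j : ℝ) : ℂ) * z j) = μ * z i := by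
      have := congrFun hz i
      simpa [Matrix.mulVec, dotProduct, Matrix.map_apply] using this
    calc ‖μ‖ * v' i = ‖μ * z i‖ := by rw [norm_mul]
      _ = ‖∑ j, ((A i j : ℝ) : ℂ) * z j‖ := by rw [h1]
      _ ≤ ∑ j, ‖((A i j : ℝ) : ℂ) * z j‖ := norm_sum_le _ _
      _ = ∑ j, A i j * v' j := Finset.sum_congr rfl fun j _ => by
          rw [norm_mul, Complex.norm_real, Real.norm_eq_abs, abs_of_nonneg (hA0 i j)]
  have hupper : ∑ i, y i * ∑ j, A i j * v' j ≤ q * ∑ i, y i * v' i := by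
    calc ∑ i, y i * ∑ j, A i j * v' j = ∑ j, (∑ i, y i * A i j) * v' j := exchange y v' A
      _ ≤ ∑ j, (∑ i, y i * B i j) * v' j :=
          Finset.sum_le_sum fun j _ => mul_le_mul_of_nonneg_right
            (Finset.sum_le_sum fun i _ => mul_le_mul_of_nonneg_left (hAB i j) (hy i).le) (hv0 j)
      _ = ∑ j, (q * y j) * v' j := Finset.sum_congr rfl fun j _ => by rw [hcol j]
      _ = q * ∑ j, y j * v' j := by
          rw [Finset.mul_sum]; exact Finset.sum_congr rfl fun j _ => by ring
  have hlower : q * ∑ i, y i * v' i ≤ ∑ i, y i * ∑ j, A i j * v' j := by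
    calc q * ∑ i, y i * v' i = ∑ i, y i * (q * v' i) := by
          rw [Finset.mul_sum]; exact Finset.sum_congr rfl fun i _ => by ring
      _ ≤ ∑ i, y i * ∑ j, A i j * v' j :=
          Finset.sum_le_sum fun i _ => mul_le_mul_of_nonneg_left (key i) (hy i).le
  have hTeq : ∑ i, y i * ∑ j, A i j * v' j = q * ∑ i, y i * v' i :=
    le_antisymm hupper hlower
  have hAv : ∀ i, ∑ j, A i j * v' j = q * v' i := by
    have hsum0 : ∑ i, y i * (∑ j, A i j * v' j - q * v' i) = 0 := by
      have h1 : ∑ i, y i * (∑ j, A i j * v' j - q * v' i)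
          = ∑ i, y i * ∑ j, A i j * v' j - ∑ i, y i * (q * v' i) := by
        rw [← Finset.sum_sub_distrib]
        exact Finset.sum_congr rfl fun i _ => by ring
      rw [h1, hTeq]
      have h2 : ∑ i, y i * (q * v' i) = q * ∑ i, y i * v' i := by
        rw [Finset.mul_sum]; exact Finset.sum_congr rfl fun i _ => by ring
      rw [h2, sub_self]
    have hnn : ∀ i ∈ Finset.univ, 0 ≤ y i * (∑ j, A i j * v' j - q * v' i) :=
      fun i _ => mul_nonneg (hy i).le (sub_nonneg.mpr (key i))
    intro i
    have h3 := (Finset.sum_eq_zero_iff_of_nonneg hnn).mp hsum0 i (Finset.mem_univ i)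
    have h2 : ∑ j, A i j * v' j - q * v' i = 0 := by
      rcases mul_eq_zero.mp h3 with h | h
      · exact absurd h (hy i).ne'
      · exact h
    linarith
  have hBA : ∀ i j, (B i j - A i j) * v' j = 0 := by
    have hsum0 : ∑ j, (∑ i, y i * (B i j - A i j)) * v' j = 0 := by
      have e1 : ∑ j, (∑ i, y i * B i j) * v' j = q * ∑ i, y i * v' i := by
        calc ∑ j, (∑ i, y i * B i j) * v' j = ∑ j, (q * y j) * v' j :=
              Finset.sum_congr rfl fun j _ => by rw [hcol j]
          _ = q * ∑ j, y j * v' j := by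
              rw [Finset.mul_sum]; exact Finset.sum_congr rfl fun j _ => by ring
      have e2 : ∑ j, (∑ i, y i * A i j) * v' j = q * ∑ i, y i * v' i := by
        rw [← exchange y v' A, hTeq]
      have h4 : ∑ j, (∑ i, y i * (B i j - A i j)) * v' j
          = ∑ j, (∑ i, y i * B i j) * v' j - ∑ j, (∑ i, y i * A i j) * v' j := by
        rw [← Finset.sum_sub_distrib]
        refine Finset.sum_congr rfl fun j _ => ?_
        rw [← sub_mul, ← Finset.sum_sub_distrib]
        congr 1
        exact Finset.sum_congr rfl fun i _ => by ring
      rw [h4, e1, e2, sub_self]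
    have hnn : ∀ j ∈ Finset.univ, 0 ≤ (∑ i, y i * (B i j - A i j)) * v' j :=
      fun j _ => mul_nonneg (Finset.sum_nonneg fun i _ =>
        mul_nonneg (hy i).le (sub_nonneg.mpr (hAB i j))) (hv0 j)
    intro i j
    have hj := (Finset.sum_eq_zero_iff_of_nonneg hnn).mp hsum0 j (Finset.mem_univ j)
    rcases mul_eq_zero.mp hj with h | h
    · have hterm := (Finset.sum_eq_zero_iff_of_nonneg
        (fun i _ => mul_nonneg (hy i).le (sub_nonneg.mpr (hAB i j)))).mp h i (Finset.mem_univ i)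
      rcases mul_eq_zero.mp hterm with h' | h'
      · exact absurd h' (hy i).ne'
      · rw [h', zero_mul]
    · rw [h, mul_zero]
  have hBv : ∀ i, ∑ j, B i j * v' j = q * v' i := by
    intro i
    have h5 : ∑ j, B i j * v' j = ∑ j, A i j * v' j + ∑ j, (B i j - A i j) * v' j := by
      rw [← Finset.sum_add_distrib]
      exact Finset.sum_congr rfl fun j _ => by ring
    rw [h5, hAv i, Finset.sum_eq_zero fun j _ => hBA i j, add_zero]
  have hstep : ∀ j i, 0 < v' j → ¬(i = u ∧ j = v) → 0 < v' i := by
    intro j i hvj hpat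
    have h1 : B i j * v' j ≤ ∑ j', B i j' * v' j' :=
      Finset.single_le_sum (fun j' _ => mul_nonneg (hB0 i j') (hv0 j')) (Finset.mem_univ j)
    rw [hBv i] at h1
    have h2 : 0 < B i j * v' j := mul_pos (hBpat i j hpat) hvj
    nlinarith [hv0 i]
  obtain ⟨i0, hi0⟩ := Function.ne_iff.mp hz0
  have hvi0 : 0 < v' i0 := norm_pos_iff.mpr hi0
  have hall : ∀ i, 0 < v' i := by
    by_cases h0 : i0 = v
    · have hv1 : 0 < v' j1 := hstep i0 j1 hvi0 (fun h => hj1u h.1)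
      intro i
      exact hstep j1 i hv1 (fun h => hj1v h.2)
    · intro i
      exact hstep i0 i hvi0 (fun h => h0 h.2)
  have hfin := hBA u2 v2
  nlinarith [hall v2, hstr]

lemma radius_le (A : Matrix (Fin n) (Fin n) ℝ) (q : ℝ) (hq : 0 ≤ q)
    (h : ∀ μ ∈ spectrum ℂ (A.map ((↑) : ℝ → ℂ)), ‖μ‖ ≤ q) : radius A ≤ q := by
  rw [radius]
  rcases Set.eq_empty_or_nonempty
    {r : ℝ | ∃ μ ∈ spectrum ℂ (A.map ((↑) : ℝ → ℂ)), r = ‖μ‖} with he | hne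
  · rw [he, Real.sSup_empty]; exact hq
  · apply csSup_le hne
    rintro r ⟨μ, hμ, rfl⟩
    exact h μ hμ

lemma radius_lt (A : Matrix (Fin n) (Fin n) ℝ) (q : ℝ) (hq : 0 < q)
    (h : ∀ μ ∈ spectrum ℂ (A.map ((↑) : ℝ → ℂ)), ‖μ‖ < q) : radius A < q := by
  rw [radius]
  set S := {r : ℝ | ∃ μ ∈ spectrum ℂ (A.map ((↑) : ℝ → ℂ)), r = ‖μ‖} with hS
  have hfin : S.Finite := by
    have h1 : S = (fun μ : ℂ => ‖μ‖) '' spectrum ℂ (A.map ((↑) : ℝ → ℂ)) := by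
      ext r
      simp [hS, Set.mem_image, eq_comm]
    rw [h1]
    exact (Matrix.finite_spectrum _).image _
  rcases Set.eq_empty_or_nonempty S with he | hne
  · rw [he, Real.sSup_empty]; exact hq
  · obtain ⟨μ, hμ, heq⟩ := hne.csSup_mem hfin
    rw [heq]
    exact h μ hμ

lemma radius_eq (A : Matrix (Fin n) (Fin n) ℝ) (q : ℝ) (hq : 0 ≤ q)
    (h : ∀ μ ∈ spectrum ℂ (A.map ((↑) : ℝ → ℂ)), ‖μ‖ ≤ q)
    (hmem : (q : ℂ) ∈ spectrum ℂ (A.map ((↑) : ℝ → ℂ))) : radius A = q := by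
  refine le_antisymm (radius_le A q hq h) ?_
  apply le_csSup
  · refine ⟨q, ?_⟩
    rintro r ⟨μ, hμ, rfl⟩
    exact h μ hμ
  · exact ⟨(q : ℂ), hmem, by rw [Complex.norm_real, Real.norm_eq_abs, abs_of_nonneg hq]⟩

lemma Qmat_apply (W : Fin n → Fin n → ℕ) (i j : Fin n) :
    Qmat W i j = (if i = j then ((outdeg W i : ℕ) : ℝ) else 0) + ((W i j : ℕ) : ℝ) := by
  simp [Qmat, adjMat, Matrix.diagonal_apply, Matrix.add_apply]

open Finset in
lemma colsum (u v : Fin n) (huv : u ≠ v) (B : Matrix (Fin n) (Fin n) ℝ) (s q0 : ℝ)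
    (hs2 : s^2 = (n:ℝ)^2 + 2*(n:ℝ) - 7) (hq0def : q0 = (3*(n:ℝ) - 5 + s)/2)
    (hBdiag : ∀ i, B i i = if i = u then (n:ℝ)-2 else (n:ℝ)-1)
    (hBuv : B u v = 0)
    (hBoff : ∀ i j, i ≠ j → ¬(i = u ∧ j = v) → B i j = 1) (j : Fin n) :
    ∑ i, (if i = u ∨ i = v then 2*((n:ℝ)-2) else (n:ℝ)-3+s) * B i j
      = q0 * (if j = u ∨ j = v then 2*((n:ℝ)-2) else (n:ℝ)-3+s) := by
  by_cases hjv : j = v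
  · rw [hjv]
    rw [sum_two_special v u huv.symm _ (2*((n:ℝ)-2)*((n:ℝ)-1)) (2*((n:ℝ)-2)*0)
      (((n:ℝ)-3+s)*1) ?_ ?_ ?_]
    · rw [if_pos (Or.inr rfl), hq0def]; ring
    · rw [if_pos (Or.inr rfl), hBdiag v, if_neg (Ne.symm huv : ¬ v = u)]
    · rw [if_pos (Or.inl rfl), hBuv]
    · intro i hiv hiu
      rw [if_neg (by simp [hiu, hiv]), hBoff i v hiv (fun h => hiu h.1)]
  · by_cases hju : j = u
    · rw [hju]
      rw [sum_two_special u v huv _ (2*((n:ℝ)-2)*((n:ℝ)-2)) (2*((n:ℝ)-2)*1)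
        (((n:ℝ)-3+s)*1) ?_ ?_ ?_]
      · rw [if_pos (Or.inl rfl), hq0def]; ring
      · rw [if_pos (Or.inl rfl), hBdiag u, if_pos rfl]
      · rw [if_pos (Or.inr rfl), hBoff v u (Ne.symm huv) (fun h => huv h.1.symm)]
      · intro i hiu hiv
        rw [if_neg (by simp [hiu, hiv]), hBoff i u hiu (fun h => hiu h.1)]
    · rw [sum_three_special j u v hju hjv huv _ (((n:ℝ)-3+s)*((n:ℝ)-1)) (2*((n:ℝ)-2)*1)
        (2*((n:ℝ)-2)*1) (((n:ℝ)-3+s)*1) ?_ ?_ ?_ ?_]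
      · rw [if_neg (by simp [hju, hjv]), hq0def]
        linear_combination ((-1 : ℝ)/2) * hs2
      · rw [if_neg (by simp [hju, hjv]), hBdiag j, if_neg hju]
      · rw [if_pos (Or.inl rfl), hBoff u j (fun h => hju h.symm) (fun h => hjv h.2)]
      · rw [if_pos (Or.inr rfl), hBoff v j (fun h => hjv h.symm) (fun h => huv (h.1.symm ▸ rfl))]
      · intro i hij hiu hiv
        rw [if_neg (by simp [hiu, hiv]), hBoff i j hij (fun h => hiu h.1)]

open Finset in
lemma rowsum (u v : Fin n) (huv : u ≠ v) (B : Matrix (Fin n) (Fin n) ℝ) (s q0 : ℝ)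
    (hs2 : s^2 = (n:ℝ)^2 + 2*(n:ℝ) - 7) (hq0def : q0 = (3*(n:ℝ) - 5 + s)/2)
    (hBdiag : ∀ i, B i i = if i = u then (n:ℝ)-2 else (n:ℝ)-1)
    (hBuv : B u v = 0)
    (hBoff : ∀ i j, i ≠ j → ¬(i = u ∧ j = v) → B i j = 1) (i : Fin n) :
    ∑ j, B i j * (if j = u then s-(n:ℝ)+1 else 2)
      = q0 * (if i = u then s-(n:ℝ)+1 else 2) := by
  by_cases hiu : i = u
  · rw [hiu]
    rw [sum_two_special u v huv _ (((n:ℝ)-2)*(s-(n:ℝ)+1)) (0*2) (1*2) ?_ ?_ ?_]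
    · rw [if_pos rfl, hq0def]
      linear_combination ((-1 : ℝ)/2) * hs2
    · rw [if_pos rfl, hBdiag u, if_pos rfl]
    · rw [if_neg (Ne.symm huv : ¬ v = u), hBuv]
    · intro j hju hjv
      rw [if_neg hju, hBoff u j (fun h => hju h.symm) (fun h => hjv h.2)]
  · rw [sum_two_special i u hiu _ (((n:ℝ)-1)*2) (1*(s-(n:ℝ)+1)) (1*2) ?_ ?_ ?_]
    · rw [if_neg hiu, hq0def]; ring
    · rw [if_neg hiu, hBdiag i, if_neg hiu]
    · rw [if_pos rfl, hBoff i u hiu (fun h => hiu h.1)]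
    · intro j hji hju
      rw [if_neg hju, hBoff i j (fun h => hji h.symm) (fun h => hiu h.1)]

/-- Every simple strongly connected digraph `D` on `n` vertices not
isomorphic to `K_n^↔` nor to `K→(n,n-2,1)` satisfies
`q(D) < (3n-5+√(n²+2n-7))/2`; consequently `K→(n,n-2,1)` is the unique digraph with the
second maximum signless Laplacian spectral radius `(3n-5+√(n²+2n-7))/2` among all
strongly connected digraphs on `n` vertices. -/
theorem q_second_max {n : ℕ} (hn : 2 ≤ n) (W : Fin n → Fin n → ℕ) (hW : Simple W)
    (hsc : StronglyConnected W) (hK : ¬ Iso W (Kcomp n))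
    (hK2 : ¬ Iso W (Kdir n (n - 2) 1)) :
    q W < (3 * (n : ℝ) - 5 + Real.sqrt ((n : ℝ) ^ 2 + 2 * (n : ℝ) - 7)) / 2 ∧
    q (Kdir n (n - 2) 1) =
      (3 * (n : ℝ) - 5 + Real.sqrt ((n : ℝ) ^ 2 + 2 * (n : ℝ) - 7)) / 2 := by
  have hnR : (2:ℝ) ≤ (n:ℝ) := by exact_mod_cast hn
  set s : ℝ := Real.sqrt ((n:ℝ)^2 + 2*(n:ℝ) - 7) with hsdef
  have hΔ : (0:ℝ) ≤ (n:ℝ)^2 + 2*(n:ℝ) - 7 := by nlinarith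
  have hs2 : s^2 = (n:ℝ)^2 + 2*(n:ℝ) - 7 := Real.sq_sqrt hΔ
  have hs0 : 0 ≤ s := Real.sqrt_nonneg _
  set q0 : ℝ := (3 * (n:ℝ) - 5 + s) / 2 with hq0def
  have hq0pos : 0 < q0 := by rw [hq0def]; nlinarith
  have hn1 : 0 < n := by omega
  have hlastlt : n - 1 < n := by omega
  set u : Fin n := ⟨n-1, hlastlt⟩ with hu
  set v0 : Fin n := ⟨0, hn1⟩ with hv0'
  have huvval : (u:ℕ) = n - 1 := rfl
  have hv0val : (v0:ℕ) = 0 := rfl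
  have huv : u ≠ v0 := by
    intro h
    have h1 := congrArg Fin.val h
    rw [huvval, hv0val] at h1
    omega
  -- ### Second conjunct : q (Kdir n (n-2) 1) = q0
  have hsecond : q (Kdir n (n-2) 1) = q0 := by
    have hent : ∀ i j : Fin n, ((Kdir n (n-2) 1 i j : ℕ) : ℝ)
        = if i = j then 0 else if i = u ∧ j = v0 then 0 else 1 := by
      intro i j
      simp only [Kdir]
      by_cases hij : i = j
      · simp [hij]
      · rw [if_neg hij, if_neg hij]
        have hcond : (1 + (n-2) ≤ (i:ℕ) ∧ (j:ℕ) < 1) ↔ (i = u ∧ j = v0) := by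
          constructor
          · rintro ⟨h1, h2⟩
            have hi := i.isLt
            constructor
            · apply Fin.ext; rw [huvval]; omega
            · apply Fin.ext; rw [hv0val]; omega
          · rintro ⟨rfl, rfl⟩
            rw [huvval, hv0val]
            omega
        by_cases hc : 1 + (n-2) ≤ (i:ℕ) ∧ (j:ℕ) < 1
        · rw [if_pos hc, if_pos (hcond.mp hc)]; simp
        · rw [if_neg hc, if_neg (fun h => hc (hcond.mpr h))]; simp
    have houtdeg : ∀ i : Fin n, ((outdeg (Kdir n (n-2) 1) i : ℕ) : ℝ)
        = if i = u then (n:ℝ)-2 else (n:ℝ)-1 := by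
      intro i
      have hcast : ((outdeg (Kdir n (n-2) 1) i : ℕ) : ℝ)
          = ∑ j, ((Kdir n (n-2) 1 i j : ℕ) : ℝ) := by
        rw [outdeg]; push_cast; ring
      rw [hcast]
      by_cases hiu : i = u
      · rw [hiu, if_pos rfl]
        rw [sum_two_special u v0 huv _ 0 0 1 ?_ ?_ ?_]
        · ring
        · rw [hent]; simp
        · rw [hent]; simp [huv.symm, huv]
        · intro j hji hjv
          rw [hent]
          have h1 : ¬(u = j) := fun h => hji h.symm
          simp [h1, hjv]
      · rw [if_neg hiu]
        rw [sum_one_special i _ 0 1 ?_ ?_]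
        · ring
        · rw [hent]; simp
        · intro j hji
          rw [hent]
          have h1 : ¬(i = j) := fun h => hji h.symm
          have h2 : ¬(i = u ∧ j = v0) := fun h => hiu h.1
          simp [h1, h2]
    have hQd : ∀ i j, Qmat (Kdir n (n-2) 1) i j
        = (if i = j then (if i = u then (n:ℝ)-2 else (n:ℝ)-1)
            else if i = u ∧ j = v0 then 0 else 1) := by
      intro i j
      rw [Qmat_apply, hent, houtdeg]
      by_cases hij : i = j
      · simp [hij]
      · simp [hij]
    have hBdiagK : ∀ i, Qmat (Kdir n (n-2) 1) i i = if i = u then (n:ℝ)-2 else (n:ℝ)-1 := by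
      intro i; rw [hQd]; simp
    have hBuvK : Qmat (Kdir n (n-2) 1) u v0 = 0 := by
      rw [hQd]; simp [huv]
    have hBoffK : ∀ i j, i ≠ j → ¬(i = u ∧ j = v0) → Qmat (Kdir n (n-2) 1) i j = 1 := by
      intro i j h1 h2; rw [hQd]; simp [h1, h2]
    have hB0 : ∀ i j, 0 ≤ Qmat (Kdir n (n-2) 1) i j := by
      intro i j
      rw [hQd]
      split
      · split <;> linarith
      · split <;> norm_num
    have hub : ∀ μ ∈ spectrum ℂ ((Qmat (Kdir n (n-2) 1)).map ((↑) : ℝ → ℂ)),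
        ‖μ‖ ≤ q0 := by
      intro μ hμ
      rcases lt_or_ge n 3 with h2 | h3
      · -- n = 2
        have hn2 : n = 2 := by omega
        have hnC2 : (n:ℝ) = 2 := by rw [hn2]; norm_num
        have hΔ1 : (n:ℝ)^2 + 2*(n:ℝ) - 7 = 1 := by rw [hnC2]; norm_num
        have hs1 : s = 1 := by rw [hsdef, hΔ1, Real.sqrt_one]
        have hq1 : q0 = 1 := by rw [hq0def, hs1, hnC2]; norm_num
        have hvac : ∀ i : Fin n, i ≠ u → i ≠ v0 → False := by
          intro i hiu hiv
          have h1 := i.isLt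
          have h2 : (i:ℕ) ≠ n - 1 := fun h => hiu (Fin.ext (h.trans huvval.symm))
          have h3 : (i:ℕ) ≠ 0 := fun h => hiv (Fin.ext (h.trans hv0val.symm))
          omega
        refine eig_abs_le _ _ (fun _ => 1) q0 hB0 (fun i j => le_refl _) (fun _ => one_pos)
          ?_ hμ
        intro j
        by_cases hjv : j = v0
        · rw [hjv]
          rw [sum_two_special v0 u huv.symm _ (1*((n:ℝ)-1)) (1*0) 0 ?_ ?_ ?_]
          · rw [hq1, hnC2]; norm_num
          · rw [hBdiagK v0, if_neg (Ne.symm huv : ¬ v0 = u)]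
          · rw [hBuvK]
          · intro i h1 h2; exact absurd (hvac i h2 h1) not_false
        · have hju : j = u := by
            by_contra hju
            exact hvac j hju hjv
          rw [hju]
          rw [sum_two_special u v0 huv _ (1*((n:ℝ)-2)) (1*1) 0 ?_ ?_ ?_]
          · rw [hq1, hnC2]; norm_num
          · rw [hBdiagK u, if_pos rfl]
          · rw [hBoffK v0 u (Ne.symm huv) (fun h => huv h.1.symm)]
          · intro i h1 h2; exact absurd (hvac i h1 h2) not_false
      · -- n ≥ 3
        have hnR3 : (3:ℝ) ≤ (n:ℝ) := by exact_mod_cast h3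
        have hspos : 0 < s := Real.sqrt_pos.mpr (by nlinarith)
        refine eig_abs_le _ _
          (fun i => if i = u ∨ i = v0 then 2*((n:ℝ)-2) else (n:ℝ)-3+s) q0 hB0
          (fun i j => le_refl _) ?_ ?_ hμ
        · intro i
          split
          · nlinarith
          · nlinarith
        · intro j
          exact (colsum u v0 huv _ s q0 hs2 hq0def hBdiagK hBuvK hBoffK j).le
    have hmem : ((q0 : ℝ) : ℂ) ∈ spectrum ℂ ((Qmat (Kdir n (n-2) 1)).map ((↑) : ℝ → ℂ)) := by
      apply mem_spectrum_of_eigvec _ _ (fun j => if j = u then s - (n:ℝ) + 1 else 2)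
      · apply Function.ne_iff.mpr
        refine ⟨v0, ?_⟩
        simp only [if_neg (Ne.symm huv : ¬ v0 = u)]
        norm_num
      · funext i
        show ∑ j, Qmat (Kdir n (n-2) 1) i j * _ = _
        have hrow := rowsum u v0 huv _ s q0 hs2 hq0def hBdiagK hBuvK hBoffK i
        have hxrw : ∀ j : Fin n, (if j = u then s - (n:ℝ) + 1 else 2)
            = if j = u then s - (n:ℝ) + 1 else 2 := fun _ => rfl
        calc ∑ j, Qmat (Kdir n (n-2) 1) i j * (if j = u then s - (n:ℝ) + 1 else 2)
            = q0 * (if i = u then s - (n:ℝ) + 1 else 2) := hrow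
          _ = _ := by simp [Pi.smul_apply]
    exact radius_eq _ q0 hq0pos.le hub hmem
  refine ⟨?_, hsecond⟩
  -- ### First conjunct : q W < q0
  rcases lt_or_ge n 3 with h2 | h3
  · -- n = 2 : contradiction, W must be the complete digraph
    exfalso
    have hn2 : n = 2 := by omega
    apply hK
    refine ⟨Equiv.refl _, fun i j => ?_⟩
    simp only [Equiv.refl_apply, Kcomp]
    by_cases hij : i = j
    · simp [hij, hW.1]
    · rw [if_neg hij]
      have hvalne : (i:ℕ) ≠ (j:ℕ) := fun h => hij (Fin.ext h)
      have hstep : W i j ≠ 0 := by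
        rcases (hsc i j).cases_head with h | ⟨c, hc, hcb⟩
        · exact absurd h hij
        · have hca : c ≠ i := fun h => hc (h ▸ hW.1 i)
          have hcval : (c:ℕ) ≠ (i:ℕ) := fun h => hca (Fin.ext h)
          have hcj : c = j := by
            apply Fin.ext
            have h1 := i.isLt; have h2 := j.isLt; have h3 := c.isLt
            omega
          rw [← hcj]
          exact hc
      have := hW.2 i j
      omega
  · -- n ≥ 3
    have hnR3 : (3:ℝ) ≤ (n:ℝ) := by exact_mod_cast h3
    have hspos : 0 < s := Real.sqrt_pos.mpr (by nlinarith)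
    -- find a missing arc
    have hmiss : ∃ x y : Fin n, x ≠ y ∧ W x y = 0 := by
      by_contra h
      push_neg at h
      apply hK
      refine ⟨Equiv.refl _, fun i j => ?_⟩
      simp only [Equiv.refl_apply, Kcomp]
      by_cases hij : i = j
      · simp [hij, hW.1]
      · rw [if_neg hij]
        have h1 := h i j hij
        have h2 := hW.2 i j
        omega
    obtain ⟨a, b, hab, hWab⟩ := hmiss
    -- find a second missing arc
    have hmiss2 : ∃ a2 b2 : Fin n, a2 ≠ b2 ∧ W a2 b2 = 0 ∧ ¬(a2 = a ∧ b2 = b) := by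
      by_contra h
      push_neg at h
      apply hK2
      set τ : Equiv.Perm (Fin n) := Equiv.swap v0 b with hτ
      set w : Fin n := τ a with hw
      have hτw : τ w = a := Equiv.swap_apply_self _ _ _
      have hw0 : w ≠ v0 := by
        intro hh
        apply hab
        have h1 : τ v0 = a := by rw [← hh, hτw]
        rw [hτ, Equiv.swap_apply_left] at h1
        rw [← h1]
      set σ : Equiv.Perm (Fin n) := Equiv.swap u w with hσ
      set e : Equiv.Perm (Fin n) := σ.trans τ with he
      have hσ0 : σ v0 = v0 := Equiv.swap_apply_of_ne_of_ne (Ne.symm huv) (Ne.symm hw0)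
      have he0 : e v0 = b := by
        show τ (σ v0) = b
        rw [hσ0, hτ]
        exact Equiv.swap_apply_left _ _
      have hel : e u = a := by
        show τ (σ u) = a
        rw [hσ, Equiv.swap_apply_left, hτw]
      refine ⟨e, fun i j => ?_⟩
      simp only [Kdir]
      by_cases hij : i = j
      · rw [if_pos hij, hij, hW.1]
      · rw [if_neg hij]
        by_cases hc : 1 + (n - 2) ≤ (i:ℕ) ∧ (j:ℕ) < 1
        · rw [if_pos hc]
          have hi : i = u := by
            apply Fin.ext
            have := i.isLt
            rw [huvval]
            omega
          have hj : j = v0 := by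
            apply Fin.ext
            rw [hv0val]
            omega
          rw [hi, hj, hel, he0, hWab]
        · rw [if_neg hc]
          have hne' : e i ≠ e j := fun hh => hij (e.injective hh)
          by_contra hne0
          have h0 : W (e i) (e j) = 0 := by
            have := hW.2 (e i) (e j)
            omega
          have hBoth := h (e i) (e j) hne' h0
          have hi : i = u := e.injective (by rw [hel]; exact hBoth.1)
          have hj : j = v0 := e.injective (by rw [he0]; exact hBoth.2)
          apply hc
          rw [hi, hj, huvval, hv0val]
          constructor
          · omega
          · omega
    obtain ⟨a2, b2, hab2, hWab2, hne2⟩ := hmiss2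
    set Bm : Matrix (Fin n) (Fin n) ℝ := fun i j =>
      if i = j then (if i = a then (n:ℝ)-2 else (n:ℝ)-1)
      else if i = a ∧ j = b then 0 else 1 with hBm
    have hBmdiag : ∀ i, Bm i i = if i = a then (n:ℝ)-2 else (n:ℝ)-1 := by
      intro i; simp only [hBm]; simp
    have hBmuv : Bm a b = 0 := by
      simp only [hBm]; simp [hab]
    have hBmoff : ∀ i j, i ≠ j → ¬(i = a ∧ j = b) → Bm i j = 1 := by
      intro i j h1 h2; simp only [hBm]; rw [if_neg h1, if_neg h2]
    have hA0 : ∀ i j, 0 ≤ Qmat W i j := by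
      intro i j
      rw [Qmat_apply]
      have h1 : (0:ℝ) ≤ ((W i j : ℕ) : ℝ) := by positivity
      split
      · have h2 : (0:ℝ) ≤ ((outdeg W i : ℕ) : ℝ) := by positivity
        linarith
      · linarith
    have hAB : ∀ i j, Qmat W i j ≤ Bm i j := by
      intro i j
      rw [Qmat_apply]
      by_cases hij : i = j
      · rw [if_pos hij, hij, hW.1 j, hBmdiag j]
        push_cast
        rw [add_zero]
        have hout : ∑ k, ((W j k : ℕ):ℝ) ≤ if j = a then (n:ℝ)-2 else (n:ℝ)-1 := by
          by_cases hja : j = a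
          · rw [hja, if_pos rfl]
            calc ∑ k, ((W a k : ℕ):ℝ)
                ≤ ∑ k, (if k = a then 0 else if k = b then 0 else 1 : ℝ) := by
                  apply Finset.sum_le_sum
                  intro k _
                  by_cases hka : k = a
                  · simp [hka, hW.1]
                  · by_cases hkb : k = b
                    · simp [hka, hkb, hWab]
                    · rw [if_neg hka, if_neg hkb]
                      exact_mod_cast hW.2 a k
              _ = 0 + 0 + ((n:ℝ)-2)*1 := by
                  apply sum_two_special a b hab _ 0 0 1
                  · simp
                  · simp [Ne.symm hab]
                  · intro k hk1 hk2; simp [hk1, hk2]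
              _ = (n:ℝ)-2 := by ring
          · rw [if_neg hja]
            calc ∑ k, ((W j k : ℕ):ℝ)
                ≤ ∑ k, (if k = j then 0 else 1 : ℝ) := by
                  apply Finset.sum_le_sum
                  intro k _
                  by_cases hkj : k = j
                  · simp [hkj, hW.1]
                  · rw [if_neg hkj]
                    exact_mod_cast hW.2 j k
              _ = 0 + ((n:ℝ)-1)*1 := by
                  apply sum_one_special j _ 0 1
                  · simp
                  · intro k hk; simp [hk]
              _ = (n:ℝ)-1 := by ring
        rw [outdeg] at *
        push_cast
        exact hout
      · rw [if_neg hij, zero_add]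
        by_cases hc : i = a ∧ j = b
        · have : Bm i j = 0 := by rw [hc.1, hc.2]; exact hBmuv
          rw [this, hc.1, hc.2, hWab]
          norm_num
        · rw [hBmoff i j hij hc]
          exact_mod_cast hW.2 i j
    have hstr : Qmat W a2 b2 < Bm a2 b2 := by
      rw [Qmat_apply, hBmoff a2 b2 hab2 hne2, if_neg hab2, hWab2, zero_add]
      norm_num
    obtain ⟨j1, hj1a, hj1b⟩ : ∃ j1 : Fin n, j1 ≠ a ∧ j1 ≠ b := by
      have hne : (Finset.univ \ ({a, b} : Finset (Fin n))).Nonempty := by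
        rw [← Finset.card_pos, Finset.card_sdiff_of_subset (Finset.subset_univ _), Finset.card_univ,
          Fintype.card_fin]
        have hcard2 : ({a, b} : Finset (Fin n)).card ≤ 2 := by
          apply le_trans (Finset.card_insert_le _ _)
          simp
        omega
      obtain ⟨j1, hj1⟩ := hne
      rw [Finset.mem_sdiff, Finset.mem_insert, Finset.mem_singleton] at hj1
      exact ⟨j1, fun hh => hj1.2 (Or.inl hh), fun hh => hj1.2 (Or.inr hh)⟩
    have hBpat : ∀ i j, ¬(i = a ∧ j = b) → 0 < Bm i j := by
      intro i j hpat
      by_cases hij : i = j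
      · rw [hij, hBmdiag j]
        split <;> nlinarith
      · rw [hBmoff i j hij hpat]
        norm_num
    show radius (Qmat W) < q0
    apply radius_lt _ q0 hq0pos
    intro μ hμ
    refine eig_abs_lt (Qmat W) Bm
      (fun i => if i = a ∨ i = b then 2*((n:ℝ)-2) else (n:ℝ)-3+s) q0 hA0 hAB ?_ ?_
      hq0pos a b a2 b2 j1 hBpat hj1a hj1b hstr hμ
    · intro i
      split
      · nlinarith
      · nlinarith
    · intro j
      exact colsum a b hab Bm s q0 hs2 hq0def hBmdiag hBmuv hBmoff j


end SignlessDigraph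
end

section
/- Let n ≥ 4. Then ρ(C_n^→) < ρ(C_{n,n−1}) < ρ(C_{n,n−2}) < ⋯ < ρ(C_{n,2}); that is, ρ(C_{n,g+1}) < ρ(C_{n,g}) for every g with 2 ≤ g ≤ n−2, and ρ(C_n^→) < ρ(C_{n,n−1}). -/
open Matrix

namespace SignlessDigraph

variable {n : ℕ}

lemma mem_spectrum_iff_exists {n : ℕ} (M : Matrix (Fin n) (Fin n) ℂ) (μ : ℂ) :
    μ ∈ spectrum ℂ M ↔ ∃ v, v ≠ 0 ∧ M *ᵥ v = μ • v := by
  rw [spectrum.mem_iff, Algebra.algebraMap_eq_smul_one,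
    Matrix.isUnit_iff_isUnit_det, isUnit_iff_ne_zero, not_not,
    ← Matrix.exists_mulVec_eq_zero_iff]
  constructor
  · rintro ⟨v, hv, h⟩
    refine ⟨v, hv, ?_⟩
    rw [Matrix.sub_mulVec, Matrix.smul_mulVec, Matrix.one_mulVec, sub_eq_zero] at h
    exact h.symm
  · rintro ⟨v, hv, h⟩
    exact ⟨v, hv, by rw [Matrix.sub_mulVec, Matrix.smul_mulVec, Matrix.one_mulVec, h, sub_self]⟩

lemma radius_eq_of_perron {n : ℕ} (hn : 0 < n) (A : Matrix (Fin n) (Fin n) ℝ)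
    (hA : ∀ i j, 0 ≤ A i j) (w : Fin n → ℝ) (hw : ∀ i, 0 < w i)
    (r : ℝ) (hr : 0 ≤ r) (heq : A *ᵥ w = r • w) :
    radius A = r := by
  have key : IsGreatest {s : ℝ | ∃ μ ∈ spectrum ℂ (A.map ((↑) : ℝ → ℂ)), s = ‖μ‖} r := by
    constructor
    · refine ⟨(r : ℂ), ?_, by rw [Complex.norm_real, Real.norm_of_nonneg hr]⟩
      rw [mem_spectrum_iff_exists]
      refine ⟨fun i => (w i : ℂ), ?_, ?_⟩
      · intro h0
        have h1 := congrFun h0 ⟨0, hn⟩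
        simp only [Pi.zero_apply, Complex.ofReal_eq_zero] at h1
        exact (hw _).ne' h1
      · funext i
        have hi := congrFun heq i
        simp only [Matrix.mulVec, dotProduct, Pi.smul_apply, smul_eq_mul] at hi
        simp only [Matrix.mulVec, dotProduct, Matrix.map_apply, Pi.smul_apply,
          smul_eq_mul]
        exact_mod_cast congrArg (Complex.ofReal) hi
    · rintro s ⟨μ, hμ, rfl⟩
      rw [mem_spectrum_iff_exists] at hμ
      obtain ⟨v, hv, hMv⟩ := hμ
      obtain ⟨i0, -, hmax⟩ := Finset.exists_max_image Finset.univ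
        (fun i => ‖v i‖ / w i) ⟨⟨0, hn⟩, Finset.mem_univ _⟩
      set c := ‖v i0‖ / w i0 with hc
      have hcw : ∀ j, ‖v j‖ ≤ c * w j := fun j => by
        have h := hmax j (Finset.mem_univ j)
        rwa [div_le_iff₀ (hw j)] at h
      have hvi0 : ‖v i0‖ = c * w i0 := by
        rw [hc, div_mul_cancel₀ _ (hw i0).ne']
      have hcpos : 0 < c := by
        obtain ⟨k, hk⟩ := Function.ne_iff.mp hv
        have h1 : 0 < ‖v k‖ / w k :=
          div_pos (norm_pos_iff.mpr hk) (hw k)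
        exact lt_of_lt_of_le h1 (hmax k (Finset.mem_univ k))
      have hpos : 0 < ‖v i0‖ := hvi0 ▸ mul_pos hcpos (hw i0)
      have hrow := congrFun hMv i0
      simp only [Matrix.mulVec, dotProduct, Matrix.map_apply, Pi.smul_apply,
        smul_eq_mul] at hrow
      have h1 : ‖μ‖ * ‖v i0‖ ≤ ∑ j, A i0 j * ‖v j‖ := by
        rw [← norm_mul, ← hrow]
        refine le_trans (norm_sum_le _ _) (le_of_eq (Finset.sum_congr rfl fun j _ => ?_))
        rw [norm_mul, Complex.norm_real, Real.norm_of_nonneg (hA i0 j)]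
      have h2 : ∑ j, A i0 j * ‖v j‖ ≤ ∑ j, A i0 j * (c * w j) :=
        Finset.sum_le_sum fun j _ => mul_le_mul_of_nonneg_left (hcw j) (hA i0 j)
      have h3 : ∑ j, A i0 j * (c * w j) = c * (r * w i0) := by
        have h4 := congrFun heq i0
        simp only [Matrix.mulVec, dotProduct, Pi.smul_apply, smul_eq_mul] at h4
        rw [← h4, Finset.mul_sum]
        exact Finset.sum_congr rfl fun j _ => by ring
      have h5 : ‖μ‖ * ‖v i0‖ ≤ r * ‖v i0‖ := by
        rw [hvi0]; calc ‖μ‖ * (c * w i0) ≤ c * (r * w i0) := by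
                          rw [← hvi0]; exact le_trans h1 (h2.trans_eq h3)
          _ = r * (c * w i0) := by ring
      exact le_of_mul_le_mul_right h5 hpos
  exact key.csSup_eq

lemma sum_indicator_one {n : ℕ} (f : Fin n → ℝ) (c : Fin n → ℕ) (a : ℕ) (ha : a < n)
    (h : ∀ j : Fin n, c j = if (j : ℕ) = a then 1 else 0) :
    ∑ j, (c j : ℝ) * f j = f ⟨a, ha⟩ := by
  have key : ∀ j : Fin n, (c j : ℝ) * f j = if j = ⟨a, ha⟩ then f j else 0 := by
    intro j
    rw [h]
    by_cases hj : j = ⟨a, ha⟩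
    · subst hj; simp
    · have hj' : (j : ℕ) ≠ a := fun hh => hj (Fin.ext hh)
      simp [hj, hj']
  simp_rw [key]
  simp

lemma sum_indicator_two {n : ℕ} (f : Fin n → ℝ) (c : Fin n → ℕ) (a b : ℕ)
    (ha : a < n) (hb : b < n) (hab : a ≠ b)
    (h : ∀ j : Fin n, c j = if (j : ℕ) = a then 1 else if (j : ℕ) = b then 1 else 0) :
    ∑ j, (c j : ℝ) * f j = f ⟨a, ha⟩ + f ⟨b, hb⟩ := by
  have key : ∀ j : Fin n, (c j : ℝ) * f j =
      (if j = ⟨a, ha⟩ then f j else 0) + (if j = ⟨b, hb⟩ then f j else 0) := by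
    intro j
    rw [h]
    by_cases hja : j = ⟨a, ha⟩
    · subst hja
      have : ((⟨a, ha⟩ : Fin n) : ℕ) ≠ b := by simpa using hab
      simp [this]
    · have hja' : (j : ℕ) ≠ a := fun hh => hja (Fin.ext hh)
      by_cases hjb : j = ⟨b, hb⟩
      · subst hjb; simp [hja, hja']
      · have hjb' : (j : ℕ) ≠ b := fun hh => hjb (Fin.ext hh)
        simp [hja, hja', hjb, hjb']
  simp_rw [key, Finset.sum_add_distrib]
  simp

lemma exists_root {n m : ℕ} (hm : 1 ≤ m) (hmn : m < n) :
    ∃ r : ℝ, 1 < r ∧ r ^ n = r ^ m + 1 := by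
  set f : ℝ → ℝ := fun x => x ^ n - x ^ m - 1 with hf
  have hcont : ContinuousOn f (Set.Icc 1 2) := by fun_prop
  have h1 : f 1 = -1 := by simp [hf]
  have h2 : 0 ≤ f 2 := by
    have e1 : (2:ℝ) ^ m ≤ 2 ^ (n-1) := pow_le_pow_right₀ (by norm_num) (by omega)
    have e2 : (2:ℝ) ^ n = 2 * 2 ^ (n-1) := by
      rw [← pow_succ', Nat.sub_add_cancel (by omega)]
    have e3 : (1:ℝ) ≤ 2 ^ (n-1) := one_le_pow₀ (by norm_num)
    simp only [hf]
    nlinarith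
  have hsub := intermediate_value_Icc (by norm_num : (1:ℝ) ≤ 2) hcont
  have hmem : (0:ℝ) ∈ Set.Icc (f 1) (f 2) := ⟨by rw [h1]; norm_num, h2⟩
  obtain ⟨c, hc, hc0⟩ := hsub hmem
  refine ⟨c, ?_, ?_⟩
  · rcases eq_or_lt_of_le hc.1 with rfl | h
    · rw [h1] at hc0; norm_num at hc0
    · exact h
  · have : c ^ n - c ^ m - 1 = 0 := hc0
    linarith

lemma pow_sub_strictMono {m n : ℕ} (hm : 1 ≤ m) (hmn : m < n) {a b : ℝ}
    (ha : 1 ≤ a) (hab : a < b) : a ^ n - a ^ m < b ^ n - b ^ m := by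
  have hb1 : (1:ℝ) ≤ b := le_of_lt (lt_of_le_of_lt ha hab)
  have key : ∀ x : ℝ, x ^ n - x ^ m = x ^ m * (x ^ (n - m) - 1) := by
    intro x
    rw [mul_sub, mul_one, ← pow_add, Nat.add_sub_cancel' (by omega)]
  rw [key a, key b]
  have e1 : a ^ m ≤ b ^ m := pow_le_pow_left₀ (by linarith) hab.le m
  have e2 : a ^ (n-m) < b ^ (n-m) := pow_lt_pow_left₀ hab (by linarith) (by omega)
  have e3 : (0:ℝ) ≤ a ^ (n-m) - 1 := by
    have := one_le_pow₀ (n := n - m) ha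
    linarith
  have e4 : (0:ℝ) < b ^ m := pow_pos (by linarith) m
  calc a ^ m * (a ^ (n-m) - 1) ≤ b ^ m * (a ^ (n-m) - 1) :=
        mul_le_mul_of_nonneg_right e1 e3
    _ < b ^ m * (b ^ (n-m) - 1) := by
        apply mul_lt_mul_of_pos_left (by linarith) e4

lemma rho_cyc_eq {n : ℕ} (hn : 0 < n) : rho (cyc n) = 1 := by
  show radius (adjMat (cyc n)) = 1
  apply radius_eq_of_perron hn _ (fun i j => by unfold adjMat; positivity)
    (fun _ => 1) (fun _ => one_pos) 1 zero_le_one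
  funext i
  simp only [Matrix.mulVec, dotProduct, Pi.smul_apply, smul_eq_mul, adjMat]
  have key := sum_indicator_one (n := n) (fun _ => 1) (cyc n i) (((i:ℕ)+1) % n)
    (Nat.mod_lt _ hn) (fun j => rfl)
  simpa using key

lemma rho_Cng_eq {n g : ℕ} (hn : 2 ≤ n) (hg2 : 2 ≤ g) (hgn : g ≤ n - 1)
    {r : ℝ} (hr1 : 1 < r) (hre : r ^ n = r ^ (n - g) + 1) :
    rho (Cng n g) = r := by
  have hn0 : 0 < n := by omega
  have hgn' : g < n := by omega
  have hrpos : (0:ℝ) < r := by linarith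
  have hrg1 : (1:ℝ) < r ^ g := one_lt_pow₀ hr1 (by omega)
  set w : Fin n → ℝ := fun i => if (i:ℕ) < g then r ^ (i:ℕ) else r ^ ((i:ℕ) - g) * (r ^ g - 1)
    with hw
  have hwpos : ∀ i, 0 < w i := by
    intro i
    by_cases h : (i:ℕ) < g
    · simp only [hw, h, if_true]; positivity
    · simp only [hw, h, if_false]
      exact mul_pos (pow_pos hrpos _) (by linarith)
  show radius (adjMat (Cng n g)) = r
  apply radius_eq_of_perron hn0 _ (fun i j => by unfold adjMat; positivity) w hwpos r
    (by linarith)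
  funext i
  simp only [Matrix.mulVec, dotProduct, Pi.smul_apply, smul_eq_mul, adjMat]
  have hik := i.isLt
  by_cases hkn : (i:ℕ) = n - 1
  · -- last row
    have hrow : ∀ j : Fin n, Cng n g i j = if (j:ℕ) = 0 then 1 else 0 := by
      intro j
      have hj := j.isLt
      simp only [Cng]
      split_ifs <;> omega
    rw [sum_indicator_one w (Cng n g i) 0 hn0 hrow]
    have hwi : w i = r ^ (n - 1 - g) * (r ^ g - 1) := by
      simp only [hw, hkn]
      rw [if_neg (by omega)]
    have hw0 : w ⟨0, hn0⟩ = 1 := by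
      have h0 : ((⟨0, hn0⟩ : Fin n) : ℕ) = 0 := rfl
      simp only [hw, h0, pow_zero, if_pos (show 0 < g by omega)]
    rw [hw0, hwi]
    have e1 : r * r ^ (n - 1 - g) = r ^ (n - g) := by
      rw [← pow_succ']
      congr 1
      omega
    have e2 : r ^ (n - g) * r ^ g = r ^ n := by
      rw [← pow_add]
      congr 1
      omega
    rw [← mul_assoc, e1, mul_sub, e2, mul_one, hre]
    ring
  · by_cases hkg : (i:ℕ) = g - 1
    · -- row g-1
      have hrow : ∀ j : Fin n, Cng n g i j =
          if (j:ℕ) = g then 1 else if (j:ℕ) = 0 then 1 else 0 := by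
        intro j
        have hj := j.isLt
        simp only [Cng]
        split_ifs <;> omega
      rw [sum_indicator_two w (Cng n g i) g 0 hgn' hn0 (by omega) hrow]
      have hwg : w ⟨g, hgn'⟩ = r ^ g - 1 := by
        simp only [hw]
        rw [if_neg (by simp)]
        simp
      have hw0 : w ⟨0, hn0⟩ = 1 := by
        have h0 : ((⟨0, hn0⟩ : Fin n) : ℕ) = 0 := rfl
        simp only [hw, h0, pow_zero, if_pos (show 0 < g by omega)]
      have hwi : w i = r ^ (g - 1) := by
        simp only [hw, hkg]
        rw [if_pos (by omega)]
      rw [hwg, hw0, hwi, ← pow_succ']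
      have : g - 1 + 1 = g := by omega
      rw [this]
      ring
    · -- generic row
      have hrow : ∀ j : Fin n, Cng n g i j = if (j:ℕ) = (i:ℕ) + 1 then 1 else 0 := by
        intro j
        have hj := j.isLt
        simp only [Cng]
        split_ifs <;> omega
      rw [sum_indicator_one w (Cng n g i) ((i:ℕ)+1) (by omega) hrow]
      by_cases h : (i:ℕ) + 1 < g
      · have hwi : w i = r ^ (i:ℕ) := by simp only [hw]; rw [if_pos (by omega)]
        have hws : w ⟨(i:ℕ)+1, by omega⟩ = r ^ ((i:ℕ)+1) := by
          simp only [hw]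
          rw [if_pos (by simpa using h)]
        rw [hwi, hws, pow_succ']
      · have hig : ¬ ((i:ℕ) < g) := by omega
        have hwi : w i = r ^ ((i:ℕ) - g) * (r ^ g - 1) := by
          simp only [hw]; rw [if_neg hig]
        have hws : w ⟨(i:ℕ)+1, by omega⟩ = r ^ ((i:ℕ) + 1 - g) * (r ^ g - 1) := by
          simp only [hw]
          rw [if_neg (by simpa using h)]
        rw [hwi, hws]
        have e1 : r ^ ((i:ℕ) + 1 - g) = r * r ^ ((i:ℕ) - g) := by
          rw [← pow_succ']
          congr 1
          omega
        rw [e1]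
        ring

/-- For `n ≥ 4`:
`ρ(C_n^→) < ρ(C_{n,n-1}) < ρ(C_{n,n-2}) < ⋯ < ρ(C_{n,2})`. -/
theorem rho_Cng_chain {n : ℕ} (hn : 4 ≤ n) :
    rho (cyc n) < rho (Cng n (n - 1)) ∧
    ∀ g : ℕ, 2 ≤ g → g ≤ n - 2 → rho (Cng n (g + 1)) < rho (Cng n g) := by
  constructor
  · obtain ⟨r, hr1, hre⟩ := exists_root (n := n) (m := n - (n-1)) (by omega) (by omega)
    rw [rho_cyc_eq (by omega), rho_Cng_eq (by omega) (by omega) (by omega) hr1 hre]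
    exact hr1
  · intro g hg2 hgn2
    obtain ⟨r, hr1, hre⟩ := exists_root (n := n) (m := n - g) (by omega) (by omega)
    obtain ⟨r', hr1', hre'⟩ := exists_root (n := n) (m := n - (g+1)) (by omega) (by omega)
    rw [rho_Cng_eq (by omega) (by omega) (by omega) hr1 hre,
      rho_Cng_eq (by omega) (by omega) (by omega) hr1' hre']
    have hlt : r' ^ (n - (g+1)) < r' ^ (n - g) := pow_lt_pow_right₀ hr1' (by omega)
    have hfr' : r' ^ n - r' ^ (n - g) < 1 := by linarith
    have hfr : r ^ n - r ^ (n - g) = 1 := by linarith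
    rcases lt_or_ge r' r with h | h
    · exact h
    rcases eq_or_lt_of_le h with rfl | h
    · linarith
    · have := pow_sub_strictMono (n := n) (m := n - g) (by omega) (by omega) hr1.le h
      linarith

end SignlessDigraph
end

section
/- Let n ≥ 4. Then K→(n,n−2,1) is the unique digraph achieving the second maximum spectral radius (n−2+sqrt(n^2−4))/2 among all simple strongly connected digraphs on n vertices; that is, every simple strongly connected digraph D on n vertices not isomorphic to the complete digraph K_n^↔ satisfies ρ(D) ≤ (n−2+sqrt(n^2−4))/2, with equality if and only if D is isomorphic to K→(n,n−2,1). -/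
open Matrix

namespace SignlessDigraph

variable {n : ℕ}

section Aux

set_option maxHeartbeats 2000000

/-! ### Auxiliary machinery for the proof of `rho_second_max`. -/

/-- The adjacency matrix of the complete digraph minus the single arc `(p,q)`. -/
def auxPat (p q : Fin n) : Matrix (Fin n) (Fin n) ℝ :=
  Matrix.of fun i j => if i = j ∨ (i = p ∧ j = q) then 0 else 1

noncomputable def auxU (x : ℝ) (q : Fin n) : Fin n → ℝ :=
  fun i => if i = q then x / (x + 1) else 1

noncomputable def auxV (x : ℝ) (p : Fin n) : Fin n → ℝ :=
  fun j => if j = p then x / (x + 1) else 1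

lemma aux_sum_ind (a : ℝ) (k : Fin n) : ∑ i, (if i = k then a else 0) = a := by simp

lemma auxPat_nonneg (p q : Fin n) : ∀ i j, 0 ≤ auxPat p q i j := by
  intro i j; unfold auxPat; simp only [Matrix.of_apply]; split_ifs <;> norm_num

lemma auxPat_le_one (p q : Fin n) : ∀ i j, auxPat p q i j ≤ 1 := by
  intro i j; unfold auxPat; simp only [Matrix.of_apply]; split_ifs <;> norm_num

lemma auxPat_left (p q : Fin n) (hpq : p ≠ q) (x : ℝ) (hx1 : 1 ≤ x)
    (hx : x * x = ((n : ℝ) - 2) * (x + 1)) :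
    ∀ j, ∑ i, auxU x q i * auxPat p q i j = x * auxU x q j := by
  have hx0 : x + 1 ≠ 0 := by linarith
  intro j
  by_cases hjq : j = q
  · have hterm : ∀ i, auxU x q i * auxPat p q i j =
        1 - (if i = q then 1 else 0) - (if i = p then 1 else 0) := by
      intro i
      simp only [auxU, auxPat, Matrix.of_apply]
      split_ifs <;> first | ring1 | (exfalso; grind) | (field_simp; done) | (field_simp; ring)
    rw [Finset.sum_congr rfl (fun i _ => hterm i)]
    rw [Finset.sum_sub_distrib, Finset.sum_sub_distrib, aux_sum_ind, aux_sum_ind,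
      Finset.sum_const, Finset.card_univ, Fintype.card_fin]
    have huj : auxU x q j = x / (x + 1) := by simp [auxU, hjq]
    rw [huj]; field_simp; simp only [nsmul_eq_mul, mul_one]; nlinarith [hx]
  · have hterm : ∀ i, auxU x q i * auxPat p q i j =
        1 - (if i = j then 1 else 0) - (if i = q then 1 / (x + 1) else 0) := by
      intro i
      simp only [auxU, auxPat, Matrix.of_apply]
      split_ifs <;> first | ring1 | (exfalso; grind) | (field_simp; done) | (field_simp; ring)
    rw [Finset.sum_congr rfl (fun i _ => hterm i)]
    rw [Finset.sum_sub_distrib, Finset.sum_sub_distrib, aux_sum_ind, aux_sum_ind,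
      Finset.sum_const, Finset.card_univ, Fintype.card_fin]
    have huj : auxU x q j = 1 := by simp [auxU, hjq]
    rw [huj, mul_one]; field_simp; simp only [nsmul_eq_mul, mul_one]; nlinarith [hx]

lemma auxPat_right (p q : Fin n) (hpq : p ≠ q) (x : ℝ) (hx1 : 1 ≤ x)
    (hx : x * x = ((n : ℝ) - 2) * (x + 1)) :
    ∀ i, ∑ j, auxPat p q i j * auxV x p j = x * auxV x p i := by
  have hx0 : x + 1 ≠ 0 := by linarith
  intro i
  by_cases hip : i = p
  · have hterm : ∀ j, auxPat p q i j * auxV x p j =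
        1 - (if j = p then 1 else 0) - (if j = q then 1 else 0) := by
      intro j
      simp only [auxV, auxPat, Matrix.of_apply]
      split_ifs <;> first | ring1 | (exfalso; grind) | (field_simp; done) | (field_simp; ring)
    rw [Finset.sum_congr rfl (fun j _ => hterm j)]
    rw [Finset.sum_sub_distrib, Finset.sum_sub_distrib, aux_sum_ind, aux_sum_ind,
      Finset.sum_const, Finset.card_univ, Fintype.card_fin]
    have hvi : auxV x p i = x / (x + 1) := by simp [auxV, hip]
    rw [hvi]; field_simp; simp only [nsmul_eq_mul, mul_one]; nlinarith [hx]
  · have hterm : ∀ j, auxPat p q i j * auxV x p j =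
        1 - (if j = i then 1 else 0) - (if j = p then 1 / (x + 1) else 0) := by
      intro j
      simp only [auxV, auxPat, Matrix.of_apply]
      split_ifs <;> first | ring1 | (exfalso; grind) | (field_simp; done) | (field_simp; ring)
    rw [Finset.sum_congr rfl (fun j _ => hterm j)]
    rw [Finset.sum_sub_distrib, Finset.sum_sub_distrib, aux_sum_ind, aux_sum_ind,
      Finset.sum_const, Finset.card_univ, Fintype.card_fin]
    have hvi : auxV x p i = 1 := by simp [auxV, hip]
    rw [hvi, mul_one]; field_simp; simp only [nsmul_eq_mul, mul_one]; nlinarith [hx]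

lemma aux_mem_spec_iff_eig (B : Matrix (Fin n) (Fin n) ℂ) (μ : ℂ) :
    μ ∈ spectrum ℂ B ↔ ∃ v ≠ 0, B.mulVec v = μ • v := by
  rw [spectrum.mem_iff]
  constructor
  · intro h
    have hdet : ((algebraMap ℂ (Matrix (Fin n) (Fin n) ℂ)) μ - B).det = 0 := by
      by_contra hd
      exact h ((Matrix.isUnit_iff_isUnit_det _).mpr (isUnit_iff_ne_zero.mpr hd))
    obtain ⟨v, hv, hev⟩ := (Matrix.exists_mulVec_eq_zero_iff).mpr hdet
    refine ⟨v, hv, ?_⟩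
    have halg : (algebraMap ℂ (Matrix (Fin n) (Fin n) ℂ)) μ = μ • 1 := by
      simp [Algebra.algebraMap_eq_smul_one]
    rw [halg, Matrix.sub_mulVec, Matrix.smul_mulVec, Matrix.one_mulVec, sub_eq_zero] at hev
    exact hev.symm
  · rintro ⟨v, hv, hev⟩ hU
    have halg : (algebraMap ℂ (Matrix (Fin n) (Fin n) ℂ)) μ = μ • 1 := by
      simp [Algebra.algebraMap_eq_smul_one]
    have h0 : ((algebraMap ℂ (Matrix (Fin n) (Fin n) ℂ)) μ - B).mulVec v = 0 := by
      rw [halg, Matrix.sub_mulVec, Matrix.smul_mulVec, Matrix.one_mulVec, hev, sub_self]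
    have hdet := (Matrix.exists_mulVec_eq_zero_iff).mp ⟨v, hv, h0⟩
    rw [Matrix.isUnit_iff_isUnit_det, isUnit_iff_ne_zero] at hU
    exact hU hdet

lemma aux_key_bound (A : Matrix (Fin n) (Fin n) ℝ) (hA : ∀ i j, 0 ≤ A i j)
    (u : Fin n → ℝ) (hu : ∀ i, 0 < u i) (c : ℝ)
    (hc : ∀ j, ∑ i, u i * A i j ≤ c * u j)
    (μ : ℂ) (v : Fin n → ℂ) (hv : v ≠ 0)
    (heig : (A.map ((↑) : ℝ → ℂ)).mulVec v = μ • v) :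
    ‖μ‖ ≤ c := by
  set w : Fin n → ℝ := fun i => ‖v i‖ with hw
  have hwnn : ∀ i, 0 ≤ w i := fun i => norm_nonneg _
  obtain ⟨j₀, hj₀⟩ : ∃ j, v j ≠ 0 := Function.ne_iff.mp hv
  have hS : 0 < ∑ i, u i * w i := by
    have h1 : u j₀ * w j₀ ≤ ∑ i, u i * w i := by
      apply Finset.single_le_sum (fun i _ => mul_nonneg (hu i).le (hwnn i)) (Finset.mem_univ j₀)
    have h2 : 0 < u j₀ * w j₀ :=
      mul_pos (hu j₀) (by simpa [hw] using norm_pos_iff.mpr hj₀)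
    linarith
  have hpt : ∀ i, ‖μ‖ * w i ≤ ∑ j, A i j * w j := by
    intro i
    have h1 : μ * v i = ∑ j, (A i j : ℂ) * v j := by
      have := congrFun heig i
      simp only [Matrix.mulVec, dotProduct, Pi.smul_apply, smul_eq_mul,
        Matrix.map_apply] at this
      rw [← this]
    calc ‖μ‖ * w i = ‖μ * v i‖ := by simp [hw]
      _ = ‖∑ j, (A i j : ℂ) * v j‖ := by rw [h1]
      _ ≤ ∑ j, ‖(A i j : ℂ) * v j‖ := norm_sum_le _ _
      _ = ∑ j, A i j * w j := by
          refine Finset.sum_congr rfl fun j _ => ?_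
          rw [norm_mul, Complex.norm_real, Real.norm_eq_abs, abs_of_nonneg (hA i j)]
  have hmain : ‖μ‖ * ∑ i, u i * w i ≤ c * ∑ i, u i * w i := by
    calc ‖μ‖ * ∑ i, u i * w i = ∑ i, u i * (‖μ‖ * w i) := by
          rw [Finset.mul_sum]; exact Finset.sum_congr rfl fun i _ => by ring
      _ ≤ ∑ i, u i * ∑ j, A i j * w j :=
          Finset.sum_le_sum fun i _ => mul_le_mul_of_nonneg_left (hpt i) (hu i).le
      _ = ∑ j, (∑ i, u i * A i j) * w j := by
          simp only [Finset.mul_sum, Finset.sum_mul]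
          rw [Finset.sum_comm]
          exact Finset.sum_congr rfl fun i _ => Finset.sum_congr rfl fun j _ => by ring
      _ ≤ ∑ j, (c * u j) * w j :=
          Finset.sum_le_sum fun j _ => mul_le_mul_of_nonneg_right (hc j) (hwnn j)
      _ = c * ∑ j, u j * w j := by
          rw [Finset.mul_sum]; exact Finset.sum_congr rfl fun j _ => by ring
  exact le_of_mul_le_mul_right hmain hS

lemma aux_entry_mul_nonneg (A B : Matrix (Fin n) (Fin n) ℝ) (hA : ∀ i j, 0 ≤ A i j)
    (hB : ∀ i j, 0 ≤ B i j) : ∀ i j, 0 ≤ (A * B) i j := by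
  intro i j
  rw [Matrix.mul_apply]
  exact Finset.sum_nonneg fun k _ => mul_nonneg (hA i k) (hB k j)

lemma aux_entry_mul_mono (A A' B B' : Matrix (Fin n) (Fin n) ℝ)
    (hA : ∀ i j, 0 ≤ A i j) (hB : ∀ i j, 0 ≤ B i j)
    (h1 : ∀ i j, A i j ≤ A' i j) (h2 : ∀ i j, B i j ≤ B' i j) :
    ∀ i j, (A * B) i j ≤ (A' * B') i j := by
  intro i j
  rw [Matrix.mul_apply, Matrix.mul_apply]
  exact Finset.sum_le_sum fun k _ =>
    mul_le_mul (h1 i k) (h2 k j) (hB k j) (le_trans (hA i k) (h1 i k))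

lemma aux_entry_mul_upper (A B : Matrix (Fin n) (Fin n) ℝ) (a b : ℝ)
    (hB : ∀ i j, 0 ≤ B i j) (hA0 : ∀ i j, 0 ≤ A i j)
    (h1 : ∀ i j, A i j ≤ a) (h2 : ∀ i j, B i j ≤ b) :
    ∀ i j, (A * B) i j ≤ n * a * b := by
  intro i j
  rw [Matrix.mul_apply]
  calc ∑ k, A i k * B k j ≤ ∑ _k : Fin n, a * b :=
        Finset.sum_le_sum fun k _ =>
          mul_le_mul (h1 i k) (h2 k j) (hB k j) (le_trans (hA0 i k) (h1 i k))
    _ = n * a * b := by rw [Finset.sum_const, Finset.card_univ, Fintype.card_fin]; ring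

lemma aux_exists_ne3 (hn : 4 ≤ n) (a b c : Fin n) : ∃ k : Fin n, k ≠ a ∧ k ≠ b ∧ k ≠ c := by
  have hc3 : ({a, b, c} : Finset (Fin n)).card ≤ 3 := by
    apply le_trans (Finset.card_insert_le _ _)
    have := Finset.card_insert_le b ({c} : Finset (Fin n))
    simp at this ⊢
    omega
  have hns : ¬ (Finset.univ : Finset (Fin n)) ⊆ {a, b, c} := by
    intro hsub
    have h1 := Finset.card_le_card hsub
    rw [Finset.card_univ, Fintype.card_fin] at h1
    omega
  rw [Finset.not_subset] at hns
  obtain ⟨k, -, hk⟩ := hns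
  simp only [Finset.mem_insert, Finset.mem_singleton] at hk
  push_neg at hk
  exact ⟨k, hk.1, hk.2.1, hk.2.2⟩

lemma auxPat_sq_ge_one (hn : 4 ≤ n) (p q : Fin n) :
    ∀ i j, 1 ≤ (auxPat p q * auxPat p q) i j := by
  intro i j
  obtain ⟨k, hki, hkj, hkc⟩ := aux_exists_ne3 hn i j (if i = p then q else p)
  have h1 : auxPat p q i k = 1 := by
    unfold auxPat; simp only [Matrix.of_apply]
    rw [if_neg]
    rintro (h | ⟨hip, hkq⟩)
    · exact hki h.symm
    · rw [if_pos hip] at hkc; exact hkc hkq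
  have h2 : auxPat p q k j = 1 := by
    unfold auxPat; simp only [Matrix.of_apply]
    rw [if_neg]
    rintro (h | ⟨hkp, hjq⟩)
    · exact hkj h
    · by_cases hip : i = p
      · rw [if_pos hip] at hkc
        exact hki (hkp.trans hip.symm)
      · rw [if_neg hip] at hkc; exact hkc hkp
  calc (1:ℝ) = auxPat p q i k * auxPat p q k j := by rw [h1, h2]; norm_num
    _ ≤ (auxPat p q * auxPat p q) i j := by
        rw [Matrix.mul_apply]
        exact Finset.single_le_sum
          (fun l _ => mul_nonneg (auxPat_nonneg p q i l) (auxPat_nonneg p q l j))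
          (Finset.mem_univ k)

lemma aux_pow5_gap (hn : 4 ≤ n) (p q p' q' : Fin n)
    (A : Matrix (Fin n) (Fin n) ℝ) (hA0 : ∀ i j, 0 ≤ A i j)
    (hAB : ∀ i j, A i j ≤ auxPat p q i j)
    (hp'q' : p' ≠ q') (hnpq : ¬(p' = p ∧ q' = q)) (hA' : A p' q' = 0) :
    ∀ i j, (A ^ 5) i j + 1 ≤ (auxPat p q ^ 5) i j := by
  set B := auxPat p q with hB
  have hB0 : ∀ i j, 0 ≤ B i j := auxPat_nonneg p q
  have hBpq' : B p' q' = 1 := by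
    rw [hB]; unfold auxPat; simp only [Matrix.of_apply]
    rw [if_neg]; rintro (h | h); exacts [hp'q' h, hnpq h]
  set Em : Matrix (Fin n) (Fin n) ℝ :=
    Matrix.of (fun i j => if i = p' ∧ j = q' then 1 else 0) with hEm
  have hEm0 : ∀ i j, 0 ≤ Em i j := by
    intro i j; rw [hEm]; simp only [Matrix.of_apply]; split_ifs <;> norm_num
  have hAE : ∀ i j, (A + Em) i j ≤ B i j := by
    intro i j
    by_cases h : i = p' ∧ j = q'
    · rw [h.1, h.2]
      simp only [Matrix.add_apply, hEm, Matrix.of_apply,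
        if_pos (⟨rfl, rfl⟩ : p' = p' ∧ q' = q')]
      rw [hA', hBpq']; norm_num
    · simp only [Matrix.add_apply, hEm, Matrix.of_apply, if_neg h, add_zero]
      exact hAB i j
  have hAE0 : ∀ i j, 0 ≤ (A + Em) i j := fun i j => add_nonneg (hA0 i j) (hEm0 i j)
  have h5B : B ^ 5 = B ^ 2 * B * B ^ 2 := by
    rw [show (5:ℕ) = 2 + 1 + 2 from rfl, pow_add, pow_add, pow_one]
  have h5A : A ^ 5 = A ^ 2 * A * A ^ 2 := by
    rw [show (5:ℕ) = 2 + 1 + 2 from rfl, pow_add, pow_add, pow_one]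
  have hsq : ∀ i j, (A ^ 2) i j ≤ (B ^ 2) i j := by
    rw [pow_two, pow_two]; exact aux_entry_mul_mono A B A B hA0 hA0 hAB hAB
  have hA20 : ∀ i j, 0 ≤ (A ^ 2) i j := by
    rw [pow_two]; exact aux_entry_mul_nonneg A A hA0 hA0
  have hB20 : ∀ i j, 0 ≤ (B ^ 2) i j := by
    rw [pow_two]; exact aux_entry_mul_nonneg B B hB0 hB0
  have hA2A0 : ∀ i j, 0 ≤ (A ^ 2 * A) i j := aux_entry_mul_nonneg _ _ hA20 hA0
  have hB2AE0 : ∀ i j, 0 ≤ (B ^ 2 * (A + Em)) i j := aux_entry_mul_nonneg _ _ hB20 hAE0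
  have step1 : ∀ i j, (A ^ 5) i j ≤ (B ^ 2 * A * B ^ 2) i j := by
    rw [h5A]
    exact aux_entry_mul_mono _ _ _ _ hA2A0 hA20
      (aux_entry_mul_mono _ _ _ _ hA20 hA0 hsq (fun i j => le_refl _)) hsq
  have step2 : ∀ i j, (B ^ 2 * A * B ^ 2) i j + (B ^ 2 * Em * B ^ 2) i j ≤ (B ^ 5) i j := by
    intro i j
    have hsplit : (B ^ 2 * (A + Em) * B ^ 2) i j
        = (B ^ 2 * A * B ^ 2) i j + (B ^ 2 * Em * B ^ 2) i j := by
      rw [Matrix.mul_add, Matrix.add_mul]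
      simp [Matrix.add_apply]
    have hle : (B ^ 2 * (A + Em) * B ^ 2) i j ≤ (B ^ 5) i j := by
      rw [h5B]
      exact aux_entry_mul_mono _ _ _ _ hB2AE0 hB20
        (aux_entry_mul_mono _ _ _ _ hB20 hAE0 (fun i j => le_refl _) hAE)
        (fun i j => le_refl _) i j
    linarith [hsplit ▸ hle]
  have step3 : ∀ i j, 1 ≤ (B ^ 2 * Em * B ^ 2) i j := by
    intro i j
    have hEB : ∀ k, (Em * B ^ 2) k j = if k = p' then (B ^ 2) q' j else 0 := by
      intro k
      rw [Matrix.mul_apply]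
      have hl : ∀ l, Em k l * (B ^ 2) l j = if k = p' ∧ l = q' then (B ^ 2) l j else 0 := by
        intro l; rw [hEm]; simp only [Matrix.of_apply]; split_ifs <;> simp
      rw [Finset.sum_congr rfl fun l _ => hl l]
      by_cases hk : k = p'
      · simp [hk]
      · simp [hk]
    have hBB : B ^ 2 = auxPat p q * auxPat p q := by rw [pow_two, hB]
    rw [Matrix.mul_assoc, Matrix.mul_apply]
    calc (1:ℝ) ≤ (B ^ 2) i p' * (B ^ 2) q' j := by
          rw [hBB]; nlinarith [auxPat_sq_ge_one hn p q i p', auxPat_sq_ge_one hn p q q' j]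
      _ = (B ^ 2) i p' * (Em * B ^ 2) p' j := by rw [hEB p', if_pos rfl]
      _ ≤ ∑ k, (B ^ 2) i k * (Em * B ^ 2) k j := by
          apply Finset.single_le_sum (f := fun k => (B ^ 2) i k * (Em * B ^ 2) k j)
            (fun k _ => mul_nonneg (hB20 i k)
              (by rw [hEB k]; split_ifs; exacts [hB20 q' j, le_refl 0]))
            (Finset.mem_univ p')
  intro i j
  calc (A ^ 5) i j + 1 ≤ (B ^ 2 * A * B ^ 2) i j + (B ^ 2 * Em * B ^ 2) i j := by
        linarith [step1 i j, step3 i j]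
    _ ≤ (B ^ 5) i j := step2 i j

lemma aux_pow5_upper (p q : Fin n) : ∀ i j, (auxPat p q ^ 5) i j ≤ (n:ℝ) ^ 4 := by
  have hB0 := auxPat_nonneg p q
  have hB1 := auxPat_le_one p q
  have h2 : ∀ i j, (auxPat p q ^ 2) i j ≤ (n:ℝ) * 1 * 1 := by
    rw [pow_two]; exact aux_entry_mul_upper _ _ 1 1 hB0 hB0 hB1 hB1
  have h20 : ∀ i j, 0 ≤ (auxPat p q ^ 2) i j := by
    rw [pow_two]; exact aux_entry_mul_nonneg _ _ hB0 hB0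
  have h3 : ∀ i j, (auxPat p q ^ 2 * auxPat p q) i j ≤ (n:ℝ) * ((n:ℝ) * 1 * 1) * 1 :=
    aux_entry_mul_upper _ _ _ 1 hB0 h20 h2 hB1
  have h30 : ∀ i j, 0 ≤ (auxPat p q ^ 2 * auxPat p q) i j := aux_entry_mul_nonneg _ _ h20 hB0
  have h5 : ∀ i j, (auxPat p q ^ 2 * auxPat p q * auxPat p q ^ 2) i j
      ≤ (n:ℝ) * ((n:ℝ) * ((n:ℝ) * 1 * 1) * 1) * ((n:ℝ) * 1 * 1) :=
    aux_entry_mul_upper _ _ _ _ h20 h30 h3 h2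
  intro i j
  have h5B : auxPat p q ^ 5 = auxPat p q ^ 2 * auxPat p q * auxPat p q ^ 2 := by
    rw [show (5:ℕ) = 2 + 1 + 2 from rfl, pow_add, pow_add, pow_one]
  rw [h5B]
  calc (auxPat p q ^ 2 * auxPat p q * auxPat p q ^ 2) i j
      ≤ (n:ℝ) * ((n:ℝ) * ((n:ℝ) * 1 * 1) * 1) * ((n:ℝ) * 1 * 1) := h5 i j
    _ = (n:ℝ) ^ 4 := by ring

lemma aux_left_pow (B : Matrix (Fin n) (Fin n) ℝ) (u : Fin n → ℝ) (x : ℝ)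
    (h : ∀ j, ∑ i, u i * B i j = x * u j) :
    ∀ (k : ℕ) (j : Fin n), ∑ i, u i * (B ^ k) i j = x ^ k * u j := by
  intro k
  induction k with
  | zero =>
    intro j
    simp only [pow_zero, Matrix.one_apply]
    simp [Finset.sum_ite_eq, mul_ite]
  | succ k ih =>
    intro j
    rw [pow_succ]
    calc ∑ i, u i * (B ^ k * B) i j
        = ∑ i, ∑ m, u i * ((B ^ k) i m * B m j) := by
          refine Finset.sum_congr rfl fun i _ => ?_
          rw [Matrix.mul_apply, Finset.mul_sum]
      _ = ∑ m, (∑ i, u i * (B ^ k) i m) * B m j := by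
          rw [Finset.sum_comm]
          refine Finset.sum_congr rfl fun m _ => ?_
          rw [Finset.sum_mul]
          exact Finset.sum_congr rfl fun i _ => by ring
      _ = ∑ m, x ^ k * (u m * B m j) := by
          refine Finset.sum_congr rfl fun m _ => ?_
          rw [ih m]; ring
      _ = x ^ k * (x * u j) := by rw [← Finset.mul_sum, h j]
      _ = x ^ (k + 1) * u j := by ring

lemma aux_mulVec_pow (B : Matrix (Fin n) (Fin n) ℂ) (v : Fin n → ℂ) (μ : ℂ)
    (h : B.mulVec v = μ • v) (k : ℕ) : (B ^ k).mulVec v = μ ^ k • v := by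
  induction k with
  | zero => simp [Matrix.one_mulVec]
  | succ k ih =>
    rw [pow_succ, ← Matrix.mulVec_mulVec, h, Matrix.mulVec_smul, ih, smul_smul, pow_succ]
    ring_nf

lemma aux_map_pow (A : Matrix (Fin n) (Fin n) ℝ) (k : ℕ) :
    (A ^ k).map ((↑) : ℝ → ℂ) = (A.map ((↑) : ℝ → ℂ)) ^ k := by
  induction k with
  | zero => ext i j; simp [Matrix.one_apply, apply_ite]
  | succ k ih =>
    rw [pow_succ, pow_succ, ← ih]
    exact Matrix.map_mul (f := Complex.ofRealHom)

lemma aux_entry_pow_nonneg (A : Matrix (Fin n) (Fin n) ℝ) (hA : ∀ i j, 0 ≤ A i j) (k : ℕ) :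
    ∀ i j, 0 ≤ (A ^ k) i j := by
  induction k with
  | zero => intro i j; simp only [pow_zero, Matrix.one_apply]; split_ifs <;> norm_num
  | succ k ih => rw [pow_succ]; exact aux_entry_mul_nonneg _ _ ih hA

lemma aux_uvec_pos (x : ℝ) (hx1 : 1 ≤ x) (q : Fin n) : ∀ i, 0 < auxU x q i := by
  intro i; unfold auxU; split_ifs
  · have h1 : 0 < x + 1 := by linarith
    positivity
  · norm_num

/-- Upper bound for moduli of eigenvalues when `W ≤ auxPat p q` entrywise. -/
lemma aux_abs_le (p q : Fin n) (hpq : p ≠ q) (x : ℝ) (hx1 : 1 ≤ x)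
    (hx : x * x = ((n:ℝ) - 2) * (x + 1)) (W : Fin n → Fin n → ℕ)
    (hle : ∀ i j, ((W i j : ℝ)) ≤ auxPat p q i j) (μ : ℂ)
    (hμ : μ ∈ spectrum ℂ ((adjMat W).map ((↑) : ℝ → ℂ))) : ‖μ‖ ≤ x := by
  obtain ⟨v, hv, heig⟩ := (aux_mem_spec_iff_eig _ μ).mp hμ
  refine aux_key_bound (adjMat W) (fun i j => Nat.cast_nonneg _) (auxU x q)
    (aux_uvec_pos x hx1 q) x ?_ μ v hv heig
  intro j
  calc ∑ i, auxU x q i * adjMat W i j ≤ ∑ i, auxU x q i * auxPat p q i j :=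
      Finset.sum_le_sum fun i _ =>
        mul_le_mul_of_nonneg_left (hle i j) (aux_uvec_pos x hx1 q i).le
    _ = x * auxU x q j := auxPat_left p q hpq x hx1 hx j

lemma aux_rho_le (p q : Fin n) (hpq : p ≠ q) (x : ℝ) (hx1 : 1 ≤ x)
    (hx : x * x = ((n:ℝ) - 2) * (x + 1)) (W : Fin n → Fin n → ℕ)
    (hle : ∀ i j, ((W i j : ℝ)) ≤ auxPat p q i j) : rho W ≤ x := by
  apply Real.sSup_le
  · rintro r ⟨μ, hμ, rfl⟩
    exact aux_abs_le p q hpq x hx1 hx W hle μ hμ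
  · linarith

lemma aux_rho_eq (p q : Fin n) (hpq : p ≠ q) (x : ℝ) (hx1 : 1 ≤ x)
    (hx : x * x = ((n:ℝ) - 2) * (x + 1)) (W : Fin n → Fin n → ℕ)
    (heq : ∀ i j, ((W i j : ℝ)) = auxPat p q i j) : rho W = x := by
  have hle : ∀ i j, ((W i j : ℝ)) ≤ auxPat p q i j := fun i j => (heq i j).le
  refine le_antisymm (aux_rho_le p q hpq x hx1 hx W hle) ?_
  have hmem : (x:ℂ) ∈ spectrum ℂ ((adjMat W).map ((↑) : ℝ → ℂ)) := by
    rw [aux_mem_spec_iff_eig]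
    refine ⟨fun j => ((auxV x p j : ℝ) : ℂ), ?_, ?_⟩
    · intro h0
      have h1 := congrFun h0 q
      simp only [auxV, Pi.zero_apply] at h1
      rw [if_neg (fun h : q = p => hpq h.symm)] at h1
      norm_num at h1
    · funext i
      have hre : ∑ j, adjMat W i j * auxV x p j = x * auxV x p i := by
        have hcongr : ∀ j, adjMat W i j * auxV x p j = auxPat p q i j * auxV x p j := by
          intro j; rw [show adjMat W i j = ((W i j : ℝ)) from rfl, heq i j]
        rw [Finset.sum_congr rfl fun j _ => hcongr j]
        exact auxPat_right p q hpq x hx1 hx i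
      show ∑ j, ((adjMat W i j : ℝ) : ℂ) * ((auxV x p j : ℝ) : ℂ)
          = (x : ℂ) * ((auxV x p i : ℝ) : ℂ)
      rw [← Complex.ofReal_mul, ← hre, Complex.ofReal_sum]
      exact Finset.sum_congr rfl fun j _ => (Complex.ofReal_mul _ _).symm
  apply le_csSup
  · refine ⟨x, ?_⟩
    rintro r ⟨μ, hμ, rfl⟩
    exact aux_abs_le p q hpq x hx1 hx W hle μ hμ
  · exact ⟨(x:ℂ), hmem, by rw [Complex.norm_real, Real.norm_eq_abs, abs_of_nonneg (by linarith)]⟩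

lemma aux_rho_lt (hn : 4 ≤ n) (p q : Fin n) (hpq : p ≠ q) (x : ℝ) (hx1 : 1 ≤ x)
    (hx : x * x = ((n:ℝ) - 2) * (x + 1)) (W : Fin n → Fin n → ℕ)
    (hle : ∀ i j, ((W i j : ℝ)) ≤ auxPat p q i j)
    (p' q' : Fin n) (hp'q' : p' ≠ q') (hnpq : ¬(p' = p ∧ q' = q)) (hW0 : W p' q' = 0) :
    rho W < x := by
  have hnR : (4:ℝ) ≤ (n:ℝ) := by exact_mod_cast hn
  set θ : ℝ := 1 - (((n:ℝ)) ^ 4)⁻¹ with hθdef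
  have hn4pos : (0:ℝ) < (n:ℝ) ^ 4 := by positivity
  have hθ0 : 0 ≤ θ := by
    have h0 : (1:ℝ) ≤ (n:ℝ) := by linarith
    have h1 : (1:ℝ) ≤ (n:ℝ) ^ 4 := one_le_pow₀ h0
    have h2 : ((n:ℝ) ^ 4)⁻¹ ≤ 1 := by
      rw [inv_le_one_iff₀]
      right; exact h1
    rw [hθdef]; linarith
  have hθ1 : θ < 1 := by
    rw [hθdef]
    have : 0 < ((n:ℝ) ^ 4)⁻¹ := by positivity
    linarith
  have hx0 : (0:ℝ) < x := by linarith
  set c : ℝ := (θ * x ^ 5) ^ ((5:ℝ)⁻¹) with hcdef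
  have hθx0 : 0 ≤ θ * x ^ 5 := mul_nonneg hθ0 (by positivity)
  have hc0 : 0 ≤ c := Real.rpow_nonneg hθx0 _
  have hc5 : c ^ (5:ℕ) = θ * x ^ 5 := by
    rw [hcdef, ← Real.rpow_natCast ((θ * x ^ 5) ^ ((5:ℝ)⁻¹)) 5, ← Real.rpow_mul hθx0]
    norm_num
  have hcx : c < x := by
    by_contra hcon
    push_neg at hcon
    have h5 : x ^ 5 ≤ c ^ 5 := pow_le_pow_left₀ (by linarith) hcon 5
    rw [hc5] at h5
    nlinarith [pow_pos hx0 5]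
  -- every eigenvalue has modulus at most c
  have habs : ∀ μ ∈ spectrum ℂ ((adjMat W).map ((↑) : ℝ → ℂ)), ‖μ‖ ≤ c := by
    intro μ hμ
    obtain ⟨v, hv, heig⟩ := (aux_mem_spec_iff_eig _ μ).mp hμ
    have heig5 : (((adjMat W) ^ 5).map ((↑) : ℝ → ℂ)).mulVec v = μ ^ 5 • v := by
      rw [aux_map_pow]
      exact aux_mulVec_pow _ v μ heig 5
    have hA0 : ∀ i j, 0 ≤ adjMat W i j := fun i j => Nat.cast_nonneg _
    have hA50 : ∀ i j, 0 ≤ ((adjMat W) ^ 5) i j := aux_entry_pow_nonneg _ hA0 5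
    have hgap := aux_pow5_gap hn p q p' q' (adjMat W) hA0 hle hp'q' hnpq
      (by show ((W p' q' : ℝ)) = 0; rw [hW0]; norm_num)
    have hup := aux_pow5_upper p q (n := n)
    have hA5le : ∀ i j, ((adjMat W) ^ 5) i j ≤ θ * (auxPat p q ^ 5) i j := by
      intro i j
      have h1 := hgap i j
      have h2 := hup i j
      have h3 : (((n:ℝ)) ^ 4)⁻¹ * (auxPat p q ^ 5) i j ≤ 1 := by
        rw [mul_comm, ← div_eq_mul_inv, div_le_one hn4pos]
        exact h2
      have hθexp : θ * (auxPat p q ^ 5) i j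
          = (auxPat p q ^ 5) i j - ((n:ℝ) ^ 4)⁻¹ * (auxPat p q ^ 5) i j := by
        rw [hθdef]; ring
      rw [hθexp]
      linarith
    have hkey := aux_key_bound ((adjMat W) ^ 5) hA50 (auxU x q) (aux_uvec_pos x hx1 q)
      (θ * x ^ 5) ?_ (μ ^ 5) v hv heig5
    · have habs5 : ‖μ‖ ^ 5 ≤ θ * x ^ 5 := by
        rw [← norm_pow]; exact hkey
      rw [← hc5] at habs5
      exact (pow_le_pow_iff_left₀ (norm_nonneg μ) hc0 (by norm_num)).mp habs5
    · intro j
      calc ∑ i, auxU x q i * ((adjMat W) ^ 5) i j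
          ≤ ∑ i, auxU x q i * (θ * (auxPat p q ^ 5) i j) :=
            Finset.sum_le_sum fun i _ =>
              mul_le_mul_of_nonneg_left (hA5le i j) (aux_uvec_pos x hx1 q i).le
        _ = θ * ∑ i, auxU x q i * (auxPat p q ^ 5) i j := by
            rw [Finset.mul_sum]; exact Finset.sum_congr rfl fun i _ => by ring
        _ = θ * (x ^ 5 * auxU x q j) := by
            rw [aux_left_pow (auxPat p q) (auxU x q) x (auxPat_left p q hpq x hx1 hx) 5 j]
        _ = θ * x ^ 5 * auxU x q j := by ring
  have : rho W ≤ c := by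
    apply Real.sSup_le
    · rintro r ⟨μ, hμ, rfl⟩
      exact habs μ hμ
    · exact hc0
  linarith

lemma aux_exists_equiv (hn : 4 ≤ n) (p q : Fin n) (hpq : p ≠ q) :
    ∃ e : Fin n ≃ Fin n, e ⟨n - 1, by omega⟩ = p ∧ e ⟨0, by omega⟩ = q := by
  set z : Fin n := ⟨0, by omega⟩ with hz
  set l : Fin n := ⟨n - 1, by omega⟩ with hl
  have hzl : z ≠ l := by
    rw [hz, hl]
    simp only [ne_eq, Fin.mk.injEq]
    omega
  set f := Equiv.swap z q with hf
  set r := f p with hr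
  have hrz : r ≠ z := by
    intro h
    have h2 : f r = f z := congrArg f h
    rw [hr, Equiv.swap_apply_self] at h2
    rw [hf, Equiv.swap_apply_left] at h2
    exact hpq h2
  set g := Equiv.swap l r with hg
  refine ⟨g.trans f, ?_, ?_⟩
  · rw [Equiv.trans_apply]
    have h1 : g l = r := by rw [hg]; exact Equiv.swap_apply_left l r
    rw [h1, hr, Equiv.swap_apply_self]
  · rw [Equiv.trans_apply]
    have h1 : g z = z := by
      rw [hg]
      exact Equiv.swap_apply_of_ne_of_ne hzl (Ne.symm hrz)
    rw [h1, hf, Equiv.swap_apply_left]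

end Aux

/-- For `n ≥ 4`, `K→(n,n-2,1)` is the unique digraph achieving the
second maximum spectral radius `(n-2+√(n²-4))/2` among simple strongly connected
digraphs on `n` vertices: every such digraph not isomorphic to `K_n^↔` satisfies
`ρ(D) ≤ (n-2+√(n²-4))/2`, with equality iff `D ≅ K→(n,n-2,1)`. -/
theorem rho_second_max {n : ℕ} (hn : 4 ≤ n) (W : Fin n → Fin n → ℕ) (hW : Simple W)
    (hsc : StronglyConnected W) (hK : ¬ Iso W (Kcomp n)) :
    rho W ≤ ((n : ℝ) - 2 + Real.sqrt ((n : ℝ) ^ 2 - 4)) / 2 ∧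
    (rho W = ((n : ℝ) - 2 + Real.sqrt ((n : ℝ) ^ 2 - 4)) / 2 ↔
      Iso W (Kdir n (n - 2) 1)) := by
  classical
  set x : ℝ := ((n : ℝ) - 2 + Real.sqrt ((n : ℝ) ^ 2 - 4)) / 2 with hxdef
  have hnR : (4:ℝ) ≤ (n:ℝ) := by exact_mod_cast hn
  have hsqnn : (0:ℝ) ≤ (n:ℝ) ^ 2 - 4 := by nlinarith
  have hs : Real.sqrt ((n:ℝ) ^ 2 - 4) ^ 2 = (n:ℝ) ^ 2 - 4 := Real.sq_sqrt hsqnn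
  have hs0 : (0:ℝ) ≤ Real.sqrt ((n:ℝ) ^ 2 - 4) := Real.sqrt_nonneg _
  have hx1 : 1 ≤ x := by rw [hxdef]; nlinarith
  have hx : x * x = ((n:ℝ) - 2) * (x + 1) := by rw [hxdef]; nlinarith [hs]
  -- there is a missing arc
  have hmiss : ∃ p q : Fin n, p ≠ q ∧ W p q = 0 := by
    by_contra h
    push_neg at h
    apply hK
    refine ⟨Equiv.refl _, fun i j => ?_⟩
    simp only [Equiv.refl_apply, Kcomp]
    by_cases hij : i = j
    · rw [if_pos hij, hij]; exact hW.1 j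
    · rw [if_neg hij]
      have h1 := hW.2 i j
      have h2 := h i j hij
      omega
  obtain ⟨p, q, hpq, hWpq⟩ := hmiss
  have hle : ∀ i j, ((W i j : ℝ)) ≤ auxPat p q i j := by
    intro i j
    unfold auxPat; simp only [Matrix.of_apply]
    split_ifs with h
    · rcases h with h | ⟨h1, h2⟩
      · rw [h, hW.1 j]; norm_num
      · rw [h1, h2, hWpq]; norm_num
    · exact_mod_cast hW.2 i j
  have hbound : rho W ≤ x := aux_rho_le p q hpq x hx1 hx W hle
  -- the special vertices of Kdir
  have hl' : n - 1 < n := by omega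
  have hz' : 0 < n := by omega
  set l : Fin n := ⟨n - 1, hl'⟩ with hldef
  set z : Fin n := ⟨0, hz'⟩ with hzdef
  have hlz : l ≠ z := by
    rw [hldef, hzdef]; simp only [ne_eq, Fin.mk.injEq]; omega
  -- Kdir as a pattern
  have hKdir : ∀ i j : Fin n, Kdir n (n - 2) 1 i j
      = if i = j ∨ (i = l ∧ j = z) then 0 else 1 := by
    intro i j
    unfold Kdir
    by_cases hij : i = j
    · rw [if_pos hij, if_pos (Or.inl hij)]
    · rw [if_neg hij]
      by_cases h2 : i = l ∧ j = z
      · rw [if_pos (Or.inr h2)]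
        rw [if_pos]
        constructor
        · rw [h2.1, hldef]; simp; omega
        · rw [h2.2, hzdef]; simp
      · rw [if_neg (show ¬(i = j ∨ (i = l ∧ j = z)) from fun hor => hor.elim hij h2)]
        rw [if_neg]
        rintro ⟨ha, hb⟩
        apply h2
        constructor
        · rw [hldef]
          apply Fin.ext
          simp only []
          have := i.isLt
          omega
        · rw [hzdef]
          apply Fin.ext
          simp only []
          omega
  refine ⟨hbound, ?_, ?_⟩
  · -- rho W = x → Iso W (Kdir n (n-2) 1)
    intro hrho
    by_cases hpat : ∀ a b, W a b = if a = b ∨ (a = p ∧ b = q) then 0 else 1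
    · obtain ⟨e, hel, hez⟩ := aux_exists_equiv hn p q hpq
      refine ⟨e, fun i j => ?_⟩
      rw [hpat (e i) (e j), hKdir i j]
      have h1 : e i = e j ↔ i = j := e.injective.eq_iff
      have h2 : e i = p ↔ i = l := by
        rw [← hel]; exact e.injective.eq_iff
      have h3 : e j = q ↔ j = z := by
        rw [← hez]; exact e.injective.eq_iff
      rw [if_congr (by rw [h1, h2, h3]) rfl rfl]
    · push_neg at hpat
      obtain ⟨a, b, hab⟩ := hpat
      exfalso
      have hane : a ≠ b ∧ ¬(a = p ∧ b = q) ∧ W a b = 0 := by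
        by_cases h1 : a = b ∨ (a = p ∧ b = q)
        · exfalso; apply hab
          rw [if_pos h1]
          rcases h1 with h | ⟨h2, h3⟩
          · rw [h]; exact hW.1 b
          · rw [h2, h3]; exact hWpq
        · push_neg at h1
          have hnand : ¬(a = p ∧ b = q) := fun hcl => h1.2 hcl.1 hcl.2
          rw [if_neg (show ¬(a = b ∨ (a = p ∧ b = q)) from
            fun hor => hor.elim h1.1 hnand)] at hab
          have h2 := hW.2 a b
          exact ⟨h1.1, hnand, by omega⟩
      have hlt := aux_rho_lt hn p q hpq x hx1 hx W hle a b hane.1 hane.2.1 hane.2.2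
      rw [hrho] at hlt
      exact lt_irrefl x hlt
  · -- Iso W (Kdir n (n-2) 1) → rho W = x
    rintro ⟨e, he⟩
    set p' : Fin n := e l with hp'def
    set q' : Fin n := e z with hq'def
    have hp'q' : p' ≠ q' := fun h => hlz (e.injective h)
    have hpatW : ∀ a b, ((W a b : ℝ)) = auxPat p' q' a b := by
      intro a b
      have h := he (e.symm a) (e.symm b)
      rw [e.apply_symm_apply, e.apply_symm_apply, hKdir] at h
      have h1 : e.symm a = e.symm b ↔ a = b := e.symm.injective.eq_iff
      have h2 : e.symm a = l ↔ a = p' := by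
        rw [hp'def]
        constructor
        · intro hh; rw [← hh, e.apply_symm_apply]
        · intro hh; rw [hh, Equiv.symm_apply_apply]
      have h3 : e.symm b = z ↔ b = q' := by
        rw [hq'def]
        constructor
        · intro hh; rw [← hh, e.apply_symm_apply]
        · intro hh; rw [hh, Equiv.symm_apply_apply]
      rw [if_congr (by rw [h1, h2, h3]) rfl rfl] at h
      rw [h]
      unfold auxPat
      simp only [Matrix.of_apply]
      split_ifs <;> norm_num
    exact aux_rho_eq p' q' hp'q' x hx1 hx W hpatW

end SignlessDigraph
end
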